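/- arXiv:2403.00971 — 4 statements merged into one kernel-verified Lean document; each statement's English description precedes it below -/
import Mathlib

section
/- There exists b* < 0 with the following properties. Write f_b(N) := 1/I(b,N) and let N_b* denote the unique fixed point of f_b for b < 0. (i) For every b with b* < b < 0 one has −1 < f_b'(N_b*) < 0, so N_b* is a locally asymptotically stable fixed point of the recurrence N_{k+1,∞} = f_b(N_{k,∞}). (ii) For every b < b* one has f_b'(N_b*) < −1, and for every initial value N_{0,∞} ≥ 0 with N_{0,∞} ≠ N_b* there exist N⁻ ≠ N⁺ with min(N⁻,N⁺) < N_b* < max(N⁻,N⁺), f_b(N⁻) = N⁺ and f_b(N⁺) = N⁻, such that one of the subsequences {N_{2k,∞}}, {N_{2k+1,∞}} converges to N⁻ and the other converges to N⁺. -/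
open MeasureTheory Real Filter

/-- The function `I(b,N)` from the NNLIF model, with explicit dependence on the
connectivity parameter `b`. -/
noncomputable def Ifun (V_R V_F b N : ℝ) : ℝ :=
  ∫ v in Set.Iic V_F,
    Real.exp (-(v - b * N) ^ 2 / 2) * ∫ w in (max v V_R)..V_F, Real.exp ((w - b * N) ^ 2 / 2)

open Set Topology

noncomputable def gs (t : ℝ) : ℝ := Real.exp (-t ^ 2 / 2)

lemma gs_eq (t : ℝ) : gs t = Real.exp (-(1/2) * t ^ 2) := by
  unfold gs; ring_nf

lemma gs_integrable : Integrable gs := by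
  have := integrable_exp_neg_mul_sq (by norm_num : (0:ℝ) < 1/2)
  exact this.congr (by filter_upwards with t using (gs_eq t).symm)

lemma gs_cont : Continuous gs := by
  unfold gs; fun_prop

lemma gs_pos (t : ℝ) : 0 < gs t := exp_pos _

noncomputable def Psi (s : ℝ) : ℝ := ∫ t in Set.Iio s, gs t

lemma Psi_eq_Iic (s : ℝ) : Psi s = ∫ t in Set.Iic s, gs t := by
  unfold Psi
  exact setIntegral_congr_set Iio_ae_eq_Iic

lemma Psi_sub (a s : ℝ) : Psi s - Psi a = ∫ t in a..s, gs t := by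
  rw [Psi_eq_Iic, Psi_eq_Iic]
  exact intervalIntegral.integral_Iic_sub_Iic gs_integrable.integrableOn gs_integrable.integrableOn

lemma Psi_hasDeriv (s : ℝ) : HasDerivAt Psi (gs s) s := by
  have h1 : HasDerivAt (fun u => ∫ t in (0:ℝ)..u, gs t) (gs s) s := by
    exact intervalIntegral.integral_hasDerivAt_right
      gs_integrable.intervalIntegrable
      (gs_cont.stronglyMeasurableAtFilter _ _) gs_cont.continuousAt
  have : ∀ u, Psi u = Psi 0 + ∫ t in (0:ℝ)..u, gs t := by
    intro u; rw [← Psi_sub]; ring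
  have h2 := h1.const_add (Psi 0)
  exact h2.congr_of_eventuallyEq (by filter_upwards with u using (this u))

lemma Psi_pos (s : ℝ) : 0 < Psi s := by
  unfold Psi
  rw [setIntegral_pos_iff_support_of_nonneg_ae]
  · have : (Function.support gs) = Set.univ := by
      ext t; simp [Function.support, (gs_pos t).ne']
    rw [this, Set.univ_inter]
    simp [Real.volume_Iio]
  · filter_upwards with t using (gs_pos t).le
  · exact gs_integrable.integrableOn


lemma tgs_integrable : Integrable (fun t => t * gs t) := by
  have := integrable_mul_exp_neg_mul_sq (by norm_num : (0:ℝ) < 1/2)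
  exact this.congr (by filter_upwards with t; rw [gs_eq])

lemma gs_tendsto_atBot : Tendsto gs atBot (𝓝 0) := by
  apply squeeze_zero' (g := fun t => Real.exp t)
  · filter_upwards with s using (gs_pos s).le
  · filter_upwards [Iic_mem_atBot (-2 : ℝ)] with s hs
    have hs2 : s ≤ (-2:ℝ) := hs
    unfold gs
    apply Real.exp_le_exp.mpr
    nlinarith [mul_nonneg (by linarith : (0:ℝ) ≤ -s) (by linarith : (0:ℝ) ≤ -(s+2))]
  · exact Real.tendsto_exp_atBot

lemma integral_tgs (s : ℝ) : ∫ t in Set.Iic s, t * gs t = -gs s := by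
  have hderiv : ∀ x ∈ Set.Iic s, HasDerivAt (fun t => -gs t) (x * gs x) x := by
    intro x _
    unfold gs
    have h1 : HasDerivAt (fun t : ℝ => -t ^ 2 / 2) (-x) x := by
      have := ((hasDerivAt_pow 2 x).neg.div_const 2)
      refine this.congr_deriv ?_
      simp
      ring
    have := (h1.exp).neg
    refine this.congr_deriv ?_
    ring
  have hint : IntegrableOn (fun t => t * gs t) (Set.Iic s) := tgs_integrable.integrableOn
  have htend : Tendsto (fun t => -gs t) atBot (𝓝 0) := by
    simpa using gs_tendsto_atBot.neg
  have := MeasureTheory.integral_Iic_of_hasDerivAt_of_tendsto' hderiv hint htend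
  simpa using this

lemma mills_upper {s : ℝ} (hs : s < 0) : Psi s < gs s / (-s) := by
  have hs0 : s ≠ 0 := hs.ne
  have hq : ∀ t : ℝ, (t / s - 1) * gs t = t * gs t * s⁻¹ - gs t := by
    intro t; field_simp
  have hqint : Integrable (fun t => (t / s - 1) * gs t) := by
    have : (fun t => (t / s - 1) * gs t) = fun t => t * gs t * s⁻¹ - gs t := funext hq
    rw [this]
    exact (tgs_integrable.mul_const s⁻¹).sub gs_integrable
  have key : (0:ℝ) < ∫ t in Set.Iic s, (t / s - 1) * gs t := by
    rw [setIntegral_pos_iff_support_of_nonneg_ae]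
    · have hsub : Set.Iio s ⊆ Function.support (fun t => (t / s - 1) * gs t) ∩ Set.Iic s := by
        intro t ht
        have ht' : t < s := ht
        constructor
        · have h1 : (1:ℝ) < t / s := by
            rw [lt_div_iff_of_neg hs]; linarith
          simp only [Function.mem_support]
          exact mul_ne_zero (by linarith) (gs_pos t).ne'
        · exact le_of_lt ht'
      calc (0:ENNReal) < volume (Set.Iio s) := by simp [Real.volume_Iio]
        _ ≤ _ := measure_mono hsub
    · filter_upwards [self_mem_ae_restrict measurableSet_Iic] with t ht
      have h1 : (1:ℝ) ≤ t / s := by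
        rw [le_div_iff_of_neg hs]; simpa using ht
      have := (gs_pos t).le
      exact mul_nonneg (by linarith) this
    · exact hqint.integrableOn
  have hexp : ∫ t in Set.Iic s, (t / s - 1) * gs t
      = (∫ t in Set.Iic s, t * gs t) * s⁻¹ - Psi s := by
    rw [Psi_eq_Iic, ← MeasureTheory.integral_mul_const, ← MeasureTheory.integral_sub]
    · exact integral_congr_ae (by filter_upwards with t using hq t)
    · exact (tgs_integrable.mul_const s⁻¹).integrableOn
    · exact gs_integrable.integrableOn
  rw [hexp, integral_tgs] at key
  have h2 : Psi s < -gs s * s⁻¹ := by linarith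
  calc Psi s < -gs s * s⁻¹ := h2
    _ = gs s / (-s) := by rw [div_neg, div_eq_mul_inv, neg_mul]

lemma Psi_tendsto_atBot : Tendsto Psi atBot (𝓝 0) := by
  apply squeeze_zero' (g := gs)
  · filter_upwards with s using (Psi_pos s).le
  · filter_upwards [Iic_mem_atBot (-1 : ℝ)] with s hs
    have hs2 : s ≤ (-1:ℝ) := hs
    have hs' : s < 0 := by linarith
    have h1 := (mills_upper hs').le
    have h2 : gs s / (-s) ≤ gs s := div_le_self (gs_pos s).le (by linarith)
    linarith
  · exact gs_tendsto_atBot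

/-- `h(s) = e^{s²/2} Φ(s)` up to constants. -/
noncomputable def hh (s : ℝ) : ℝ := Real.exp (s ^ 2 / 2) * Psi s

lemma hh_pos (s : ℝ) : 0 < hh s := mul_pos (exp_pos _) (Psi_pos s)

lemma sq_half_hasDeriv (x : ℝ) : HasDerivAt (fun t : ℝ => t ^ 2 / 2) x x := by
  have := (hasDerivAt_pow 2 x).div_const 2
  refine this.congr_deriv ?_
  simp

lemma hh_hasDeriv (s : ℝ) : HasDerivAt hh (s * hh s + 1) s := by
  have h1 : HasDerivAt (fun t : ℝ => Real.exp (t ^ 2 / 2)) (Real.exp (s ^ 2 / 2) * s) s := by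
    have := (sq_half_hasDeriv s).exp
    exact this
  have h2 := h1.mul (Psi_hasDeriv s)
  unfold hh
  refine h2.congr_deriv ?_
  unfold gs
  have : Real.exp (s ^ 2 / 2) * Real.exp (-s ^ 2 / 2) = 1 := by
    rw [← Real.exp_add]; ring_nf; exact Real.exp_zero
  nlinarith [this]

lemma shh_gt (s : ℝ) : -1 < s * hh s := by
  rcases le_or_gt 0 s with h | h
  · have := hh_pos s
    nlinarith
  · have h1 := mills_upper h
    unfold hh
    have h2 : -s * (Real.exp (s ^ 2 / 2) * Psi s) < -s * (Real.exp (s ^ 2 / 2) * (gs s / (-s))) := by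
      apply mul_lt_mul_of_pos_left _ (by linarith)
      exact mul_lt_mul_of_pos_left h1 (exp_pos _)
    have h3 : -s * (Real.exp (s ^ 2 / 2) * (gs s / (-s))) = 1 := by
      have hs0 : s ≠ 0 := h.ne
      unfold gs
      field_simp
      rw [← Real.exp_add]
      ring_nf
      exact Real.exp_zero
    nlinarith
lemma hh_deriv_pos (s : ℝ) : 0 < s * hh s + 1 := by linarith [shh_gt s]

lemma hh_strictMono : StrictMono hh := by
  apply strictMono_of_deriv_pos
  intro s
  rw [(hh_hasDeriv s).deriv]
  exact hh_deriv_pos s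

lemma hh_cont : Continuous hh :=
  continuous_iff_continuousAt.mpr fun s => (hh_hasDeriv s).continuousAt

/-- Auxiliary function for the lower Mills bound. -/
noncomputable def ufun (s : ℝ) : ℝ := Psi s + s / (1 + s ^ 2) * gs s

lemma one_add_sq_pos (s : ℝ) : (0:ℝ) < 1 + s ^ 2 := by positivity

lemma ufun_hasDeriv (s : ℝ) : HasDerivAt ufun (2 * gs s / (1 + s ^ 2) ^ 2) s := by
  have hne : (1 + s ^ 2 : ℝ) ≠ 0 := (one_add_sq_pos s).ne'
  have h1 : HasDerivAt (fun t : ℝ => t / (1 + t ^ 2))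
      ((1 * (1 + s ^ 2) - s * (2 * s)) / (1 + s ^ 2) ^ 2) s := by
    have hd : HasDerivAt (fun t : ℝ => 1 + t ^ 2) (2 * s) s := by
      have := (hasDerivAt_pow 2 s).const_add 1
      refine this.congr_deriv ?_
      simp
    exact (hasDerivAt_id s).div hd hne
  have h2 : HasDerivAt gs (-s * gs s) s := by
    unfold gs
    have hd : HasDerivAt (fun t : ℝ => -t ^ 2 / 2) (-s) s := by
      have := ((hasDerivAt_pow 2 s).neg.div_const 2)
      refine this.congr_deriv ?_
      simp
      ring
    have := hd.exp
    refine this.congr_deriv ?_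
    ring
  have h3 := (h1.mul h2).const_add 0
  have h4 := (Psi_hasDeriv s).add (h1.mul h2)
  unfold ufun
  refine h4.congr_deriv ?_
  unfold gs
  field_simp
  ring
lemma ufun_tendsto_atBot : Tendsto ufun atBot (𝓝 0) := by
  have h1 : Tendsto (fun s : ℝ => s / (1 + s ^ 2) * gs s) atBot (𝓝 0) := by
    refine squeeze_zero_norm' ?_ gs_tendsto_atBot
    filter_upwards with s
    have h2 : |s / (1 + s ^ 2)| ≤ 1 := by
      rw [abs_div]
      rw [div_le_one (by positivity)]
      rw [abs_of_pos (one_add_sq_pos s)]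
      nlinarith [abs_nonneg s, sq_abs s, sq_nonneg (|s| - 1)]
    calc ‖s / (1 + s ^ 2) * gs s‖ = |s / (1 + s ^ 2)| * gs s := by
          rw [norm_mul]; rw [Real.norm_eq_abs, Real.norm_eq_abs, abs_of_pos (gs_pos s)]
      _ ≤ 1 * gs s := mul_le_mul_of_nonneg_right h2 (gs_pos s).le
      _ = gs s := one_mul _
  show Tendsto (fun x => Psi x + x / (1 + x ^ 2) * gs x) atBot (𝓝 0)
  have := Psi_tendsto_atBot.add h1
  simpa using this

lemma ufun_pos (s : ℝ) : 0 < ufun s := by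
  have hmono : StrictMono ufun := by
    apply strictMono_of_deriv_pos
    intro t
    rw [(ufun_hasDeriv t).deriv]
    have := gs_pos t
    positivity
  have hnn : 0 ≤ ufun s := by
    have h1 : ∀ᶠ t in atBot, ufun t ≤ ufun s := by
      filter_upwards [Iio_mem_atBot s] with t ht
      exact (hmono ht).le
    exact le_of_tendsto ufun_tendsto_atBot h1
  calc (0:ℝ) ≤ ufun (s - 1) := by
        have h1 : ∀ᶠ t in atBot, ufun t ≤ ufun (s - 1) := by
          filter_upwards [Iio_mem_atBot (s - 1)] with t ht
          exact (hmono ht).le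
        exact le_of_tendsto ufun_tendsto_atBot h1
    _ < ufun s := hmono (by linarith)

/-- `s·h(s)` has positive derivative `(1+s²)h(s) + s`. -/
lemma shh_deriv_pos (s : ℝ) : 0 < (1 + s ^ 2) * hh s + s := by
  have key : (1 + s ^ 2) * hh s + s = (1 + s ^ 2) * Real.exp (s ^ 2 / 2) * ufun s := by
    unfold hh ufun gs
    have : Real.exp (s ^ 2 / 2) * Real.exp (-s ^ 2 / 2) = 1 := by
      rw [← Real.exp_add]; ring_nf; exact Real.exp_zero
    field_simp
    rw [neg_div] at this
    linear_combination (-s) * this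
  rw [key]
  have := ufun_pos s
  positivity

lemma shh_hasDeriv (s : ℝ) : HasDerivAt (fun t => t * hh t) ((1 + s ^ 2) * hh s + s) s := by
  have := (hasDerivAt_id s).mul (hh_hasDeriv s)
  refine this.congr_deriv ?_
  simp only [id]
  ring

lemma hh'_strictMono : StrictMono (fun s => s * hh s + 1) := by
  apply strictMono_of_deriv_pos
  intro s
  have : HasDerivAt (fun t => t * hh t + 1) ((1 + s ^ 2) * hh s + s) s := (shh_hasDeriv s).add_const 1
  rw [this.deriv]
  exact shh_deriv_pos s

noncomputable def Ffun (V_R V_F m : ℝ) : ℝ :=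
  ∫ v in Set.Iic V_F,
    Real.exp (-(v - m) ^ 2 / 2) * ∫ w in (max v V_R)..V_F, Real.exp ((w - m) ^ 2 / 2)

section Fubini

variable {V_R V_F : ℝ} (m : ℝ)

lemma E1_eq (v m : ℝ) : Real.exp (-(v - m) ^ 2 / 2) = gs (v - m) := rfl

lemma E1_integrable (m : ℝ) : Integrable (fun v : ℝ => Real.exp (-(v - m) ^ 2 / 2)) := by
  simpa only [E1_eq] using gs_integrable.comp_sub_right m

/-- The double-integral region function. -/
noncomputable def Phi (m : ℝ) : ℝ × ℝ → ℝ :=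
  Set.indicator {q : ℝ × ℝ | q.1 < q.2}
    (fun q => Real.exp (-(q.1 - m) ^ 2 / 2) * Real.exp ((q.2 - m) ^ 2 / 2))

lemma Phi_integrable : Integrable (Phi m)
    ((volume.restrict (Set.Iic V_F)).prod (volume.restrict (Set.Ioc V_R V_F))) := by
  set μ := volume.restrict (Set.Iic V_F)
  set ν := volume.restrict (Set.Ioc V_R V_F)
  have hmeas : AEStronglyMeasurable (Phi m) (μ.prod ν) := by
    apply AEStronglyMeasurable.indicator
    · apply Continuous.aestronglyMeasurable
      fun_prop
    · exact measurableSet_lt measurable_fst measurable_snd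
  set C : ℝ := Real.exp ((|V_R| + |V_F| + |m|) ^ 2 / 2) with hC
  have hg : Integrable (fun p : ℝ × ℝ => Real.exp (-(p.1 - m) ^ 2 / 2) * C) (μ.prod ν) := by
    have hconst : Integrable (fun _ : ℝ => C) ν := by
      show IntegrableOn (fun _ : ℝ => C) (Set.Ioc V_R V_F) volume
      rw [MeasureTheory.integrableOn_const_iff]
      right
      calc volume (Set.Ioc V_R V_F) = ENNReal.ofReal (V_F - V_R) := Real.volume_Ioc
        _ < ⊤ := ENNReal.ofReal_lt_top
    exact Integrable.mul_prod (L := ℝ) (f := fun v => Real.exp (-(v - m) ^ 2 / 2))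
      (g := fun _ : ℝ => C) (E1_integrable m).restrict hconst
  apply hg.mono hmeas
  have hae : ∀ᵐ p ∂(μ.prod ν), p.2 ∈ Set.Ioc V_R V_F := by
    rw [ae_iff]
    have hset : {p : ℝ × ℝ | ¬ p.2 ∈ Set.Ioc V_R V_F} = Set.univ ×ˢ (Set.Ioc V_R V_F)ᶜ := by
      ext p; simp
    rw [hset, Measure.prod_prod]
    have : ν (Set.Ioc V_R V_F)ᶜ = 0 := by
      rw [Measure.restrict_apply (measurableSet_Ioc.compl)]
      simp
    rw [this, mul_zero]
  filter_upwards [hae] with p hp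
  have hE2 : Real.exp ((p.2 - m) ^ 2 / 2) ≤ C := by
    rw [hC]
    apply Real.exp_le_exp.mpr
    have h1 : |p.2 - m| ≤ |V_R| + |V_F| + |m| := by
      have := hp.1
      have := hp.2
      have := le_abs_self V_F
      have := neg_abs_le V_R
      have := le_abs_self m
      have := neg_abs_le m
      rw [abs_le]
      constructor <;> nlinarith [abs_nonneg V_R, abs_nonneg V_F]
    have h2 := sq_le_sq' (neg_le_of_abs_le h1) (le_of_abs_le h1)
    linarith
  have hnorm : ‖Phi m p‖ ≤ Real.exp (-(p.1 - m) ^ 2 / 2) * C := by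
    unfold Phi
    rw [Set.indicator]
    split_ifs with h
    · rw [Real.norm_eq_abs, abs_of_nonneg (by positivity)]
      exact mul_le_mul_of_nonneg_left hE2 (exp_pos _).le
    · simp
      positivity
  calc ‖Phi m p‖ ≤ Real.exp (-(p.1 - m) ^ 2 / 2) * C := hnorm
    _ ≤ ‖Real.exp (-(p.1 - m) ^ 2 / 2) * C‖ := le_abs_self _

lemma Ffun_eq_intervalIntegral (hV : V_R < V_F) : Ffun V_R V_F m = ∫ s in (V_R - m)..(V_F - m), hh s := by
  set μ := volume.restrict (Set.Iic V_F)
  set ν := volume.restrict (Set.Ioc V_R V_F)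
  have key : Ffun V_R V_F m = ∫ v, (∫ w, Phi m (v, w) ∂ν) ∂μ := by
    unfold Ffun
    apply setIntegral_congr_fun measurableSet_Iic
    intro v hv
    have hv' : v ≤ V_F := hv
    have h1 : (∫ w in (max v V_R)..V_F, Real.exp ((w - m) ^ 2 / 2))
        = ∫ w in Set.Ioc (max v V_R) V_F, Real.exp ((w - m) ^ 2 / 2) := by
      rw [intervalIntegral.integral_of_le (max_le hv' hV.le)]
    have h2 : ∫ w, Phi m (v, w) ∂ν
        = ∫ w in Set.Ioc V_R V_F, Set.indicator (Set.Ioi v)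
            (fun w => Real.exp (-(v - m) ^ 2 / 2) * Real.exp ((w - m) ^ 2 / 2)) w := by
      apply integral_congr_ae
      filter_upwards with w
      unfold Phi
      rw [Set.indicator, Set.indicator]
      simp only [Set.mem_setOf_eq, Set.mem_Ioi]
    show Real.exp (-(v - m) ^ 2 / 2) * (∫ w in (max v V_R)..V_F, Real.exp ((w - m) ^ 2 / 2))
        = ∫ w, Phi m (v, w) ∂ν
    rw [h1, h2, MeasureTheory.integral_indicator measurableSet_Ioi,
      Measure.restrict_restrict measurableSet_Ioi]
    have h3 : Set.Ioi v ∩ Set.Ioc V_R V_F = Set.Ioc (max v V_R) V_F := by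
      ext w
      simp only [Set.mem_inter_iff, Set.mem_Ioi, Set.mem_Ioc, max_lt_iff]
      tauto
    rw [h3, ← MeasureTheory.integral_const_mul]
  rw [key, MeasureTheory.integral_integral_swap (f := fun v w => Phi m (v, w))
    (Phi_integrable (V_R := V_R) (V_F := V_F) m)]
  have key2 : ∀ w ∈ Set.Ioc V_R V_F, (∫ v, Phi m (v, w) ∂μ) = hh (w - m) := by
    intro w hw
    have h2 : ∫ v, Phi m (v, w) ∂μ
        = ∫ v in Set.Iic V_F, Set.indicator (Set.Iio w)
            (fun v => Real.exp (-(v - m) ^ 2 / 2)) v * Real.exp ((w - m) ^ 2 / 2) := by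
      apply integral_congr_ae
      filter_upwards with v
      unfold Phi
      rw [Set.indicator, Set.indicator]
      simp only [Set.mem_setOf_eq, Set.mem_Iio]
      split_ifs <;> simp
    rw [h2]
    rw [MeasureTheory.integral_mul_const, MeasureTheory.integral_indicator measurableSet_Iio,
      Measure.restrict_restrict measurableSet_Iio]
    have h3 : Set.Iio w ∩ Set.Iic V_F = Set.Iio w :=
      Set.inter_eq_left.mpr (fun v hv => le_trans (le_of_lt hv) hw.2)
    rw [h3]
    have h4 : ∫ v in Set.Iio w, Real.exp (-(v - m) ^ 2 / 2) = Psi (w - m) := by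
      have e1 : ∫ v in Set.Iio w, Real.exp (-(v - m) ^ 2 / 2)
          = ∫ v, Set.indicator (Set.Iio w) (fun v => gs (v - m)) v := by
        rw [MeasureTheory.integral_indicator measurableSet_Iio]
        rfl
      have e2 : ∀ v : ℝ, Set.indicator (Set.Iio w) (fun v => gs (v - m)) v
          = Set.indicator (Set.Iio (w - m)) gs (v - m) := by
        intro v
        rw [Set.indicator, Set.indicator]
        simp only [Set.mem_Iio, sub_lt_sub_iff_right]
      rw [e1]
      simp_rw [e2]
      rw [integral_sub_right_eq_self (Set.indicator (Set.Iio (w - m)) gs) m]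
      rw [MeasureTheory.integral_indicator measurableSet_Iio]
      rfl
    rw [h4]
    unfold hh
    ring
  have : (∫ w, (∫ v, Phi m (v, w) ∂μ) ∂ν) = ∫ w in Set.Ioc V_R V_F, hh (w - m) :=
    setIntegral_congr_fun measurableSet_Ioc key2
  rw [this, ← intervalIntegral.integral_of_le hV.le,
    intervalIntegral.integral_comp_sub_right hh m]

end Fubini

/-- Antiderivative of `hh`. -/
noncomputable def Gh (x : ℝ) : ℝ := ∫ s in (0:ℝ)..x, hh s

lemma hh_intInt (a b : ℝ) : IntervalIntegrable hh volume a b :=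
  hh_cont.intervalIntegrable a b

lemma Gh_hasDeriv (x : ℝ) : HasDerivAt Gh (hh x) x :=
  intervalIntegral.integral_hasDerivAt_right (hh_intInt 0 x)
    (hh_cont.stronglyMeasurableAtFilter _ _) hh_cont.continuousAt

section Fanalysis

variable {V_R V_F : ℝ}

lemma Ffun_eq_G (hV : V_R < V_F) (m : ℝ) :
    Ffun V_R V_F m = Gh (V_F - m) - Gh (V_R - m) := by
  rw [Ffun_eq_intervalIntegral m hV]
  unfold Gh
  rw [← intervalIntegral.integral_add_adjacent_intervals
    (hh_intInt 0 (V_R - m)) (hh_intInt (V_R - m) (V_F - m))]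
  ring

/-- The derivative of `Ffun` in `m`. -/
noncomputable def Fd (V_R V_F m : ℝ) : ℝ := hh (V_R - m) - hh (V_F - m)

lemma Fd_neg (hV : V_R < V_F) (m : ℝ) : Fd V_R V_F m < 0 := by
  unfold Fd
  have := hh_strictMono (show V_R - m < V_F - m by linarith)
  linarith

lemma Fd_cont : Continuous (Fd V_R V_F) := by
  unfold Fd
  exact (hh_cont.comp (continuous_const.sub continuous_id)).sub
    (hh_cont.comp (continuous_const.sub continuous_id))

lemma const_sub_hasDeriv (c x : ℝ) : HasDerivAt (fun t : ℝ => c - t) (-1) x := by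
  simpa using (hasDerivAt_id x).const_sub c

lemma Ffun_hasDeriv (hV : V_R < V_F) (m : ℝ) :
    HasDerivAt (Ffun V_R V_F) (Fd V_R V_F m) m := by
  have hfun : Ffun V_R V_F = fun m => Gh (V_F - m) - Gh (V_R - m) :=
    funext (Ffun_eq_G hV)
  rw [hfun]
  have h1 : HasDerivAt (fun t : ℝ => Gh (V_F - t)) (hh (V_F - m) * (-1)) m :=
    HasDerivAt.comp m (Gh_hasDeriv (V_F - m)) (const_sub_hasDeriv V_F m)
  have h2 : HasDerivAt (fun t : ℝ => Gh (V_R - t)) (hh (V_R - m) * (-1)) m :=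
    HasDerivAt.comp m (Gh_hasDeriv (V_R - m)) (const_sub_hasDeriv V_R m)
  have := h1.sub h2
  refine this.congr_deriv ?_
  unfold Fd
  ring

lemma Ffun_pos (hV : V_R < V_F) (m : ℝ) : 0 < Ffun V_R V_F m := by
  rw [Ffun_eq_intervalIntegral m hV]
  apply intervalIntegral.intervalIntegral_pos_of_pos (hh_intInt _ _) hh_pos
  linarith

lemma Ffun_cont (hV : V_R < V_F) : Continuous (Ffun V_R V_F) :=
  continuous_iff_continuousAt.mpr fun m => (Ffun_hasDeriv hV m).continuousAt

lemma Ffun_strictAnti (hV : V_R < V_F) : StrictAnti (Ffun V_R V_F) := by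
  apply strictAnti_of_deriv_neg
  intro m
  rw [(Ffun_hasDeriv hV m).deriv]
  exact Fd_neg hV m

/-- second derivative of `Ffun`. -/
noncomputable def Fdd (V_R V_F m : ℝ) : ℝ :=
  ((V_F - m) * hh (V_F - m) + 1) - ((V_R - m) * hh (V_R - m) + 1)

lemma Fdd_pos (hV : V_R < V_F) (m : ℝ) : 0 < Fdd V_R V_F m := by
  unfold Fdd
  have := hh'_strictMono (show V_R - m < V_F - m by linarith)
  simpa using this

lemma Fd_hasDeriv (m : ℝ) : HasDerivAt (Fd V_R V_F) (Fdd V_R V_F m) m := by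
  have h1 : HasDerivAt (fun t : ℝ => hh (V_R - t))
      (((V_R - m) * hh (V_R - m) + 1) * (-1)) m :=
    HasDerivAt.comp m (hh_hasDeriv (V_R - m)) (const_sub_hasDeriv V_R m)
  have h2 : HasDerivAt (fun t : ℝ => hh (V_F - t))
      (((V_F - m) * hh (V_F - m) + 1) * (-1)) m :=
    HasDerivAt.comp m (hh_hasDeriv (V_F - m)) (const_sub_hasDeriv V_F m)
  have := h1.sub h2
  refine this.congr_deriv ?_
  unfold Fdd
  ring

/-- The function whose unique root is the bifurcation point (in `m`). -/
noncomputable def Dfun (V_R V_F m : ℝ) : ℝ := m * Fd V_R V_F m - Ffun V_R V_F m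

lemma Dfun_hasDeriv (hV : V_R < V_F) (m : ℝ) :
    HasDerivAt (Dfun V_R V_F) (m * Fdd V_R V_F m) m := by
  have h1 := ((hasDerivAt_id m).mul (Fd_hasDeriv (V_R := V_R) (V_F := V_F) m)).sub
    (Ffun_hasDeriv hV m)
  refine h1.congr_deriv ?_
  unfold Fd
  simp only [id]
  ring

lemma Dfun_strictAntiOn (hV : V_R < V_F) : StrictAntiOn (Dfun V_R V_F) (Set.Iic 0) := by
  apply strictAntiOn_of_deriv_neg (convex_Iic 0)
  · exact Continuous.continuousOn (by
      exact ((continuous_id.mul Fd_cont).sub (Ffun_cont hV)))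
  · intro m hm
    rw [interior_Iic] at hm
    rw [(Dfun_hasDeriv hV m).deriv]
    exact mul_neg_of_neg_of_pos hm (Fdd_pos hV m)

lemma Dfun_zero_neg (hV : V_R < V_F) : Dfun V_R V_F 0 < 0 := by
  unfold Dfun
  simp only [zero_mul, zero_sub, neg_lt, neg_zero]
  exact Ffun_pos hV 0

end Fanalysis

lemma Psi_strictMono : StrictMono Psi := by
  apply strictMono_of_deriv_pos
  intro s
  rw [(Psi_hasDeriv s).deriv]
  exact gs_pos s

section Bifurcation

variable {V_R V_F : ℝ}

lemma Dfun_cont (hV : V_R < V_F) : Continuous (Dfun V_R V_F) :=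
  (continuous_id.mul Fd_cont).sub (Ffun_cont hV)

lemma exists_Dfun_pos (hV : V_R < V_F) : ∃ m₁ < 0, 0 < Dfun V_R V_F m₁ := by
  have hc : 0 < V_F - V_R := by linarith
  set m : ℝ := min ((V_F + V_R) / 2 - Real.log 2 / (V_F - V_R)) (-(2 * (V_F - V_R) + 1))
    with hm
  have hm2 : m ≤ -(2 * (V_F - V_R) + 1) := min_le_right _ _
  have hm1 : m ≤ (V_F + V_R) / 2 - Real.log 2 / (V_F - V_R) := min_le_left _ _
  refine ⟨m, by nlinarith, ?_⟩
  -- abbreviations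
  set A := hh (V_R - m) with hA
  set Bq := hh (V_F - m) with hB
  -- ratio bound : 2 * A ≤ Bq
  have hratio : 2 * A ≤ Bq := by
    have h1 : Psi (V_R - m) ≤ Psi (V_F - m) :=
      (Psi_strictMono (show V_R - m < V_F - m by linarith)).le
    have hdelta : Real.log 2 ≤ (V_F - m) ^ 2 / 2 - (V_R - m) ^ 2 / 2 := by
      have expand : (V_F - m) ^ 2 / 2 - (V_R - m) ^ 2 / 2
          = (V_F - V_R) * ((V_F + V_R) / 2 - m) := by ring
      rw [expand]
      have h2 : Real.log 2 / (V_F - V_R) ≤ (V_F + V_R) / 2 - m := by linarith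
      calc Real.log 2 = (V_F - V_R) * (Real.log 2 / (V_F - V_R)) := by field_simp
        _ ≤ (V_F - V_R) * ((V_F + V_R) / 2 - m) :=
            mul_le_mul_of_nonneg_left h2 hc.le
    have h3 : 2 * Real.exp ((V_R - m) ^ 2 / 2) ≤ Real.exp ((V_F - m) ^ 2 / 2) := by
      have e1 : Real.exp ((V_F - m) ^ 2 / 2)
          = Real.exp ((V_R - m) ^ 2 / 2) * Real.exp ((V_F - m) ^ 2 / 2 - (V_R - m) ^ 2 / 2) := by
        rw [← Real.exp_add]; ring_nf
      rw [e1]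
      have e2 : (2:ℝ) ≤ Real.exp ((V_F - m) ^ 2 / 2 - (V_R - m) ^ 2 / 2) := by
        calc (2:ℝ) = Real.exp (Real.log 2) := (Real.exp_log (by norm_num)).symm
          _ ≤ _ := Real.exp_le_exp.mpr hdelta
      nlinarith [exp_pos ((V_R - m) ^ 2 / 2)]
    calc 2 * A = 2 * Real.exp ((V_R - m) ^ 2 / 2) * Psi (V_R - m) := by rw [hA]; unfold hh; ring
      _ ≤ Real.exp ((V_F - m) ^ 2 / 2) * Psi (V_F - m) := by
          apply mul_le_mul h3 h1 (Psi_pos _).le (exp_pos _).le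
      _ = Bq := by rw [hB]; rfl
  have hFle : Ffun V_R V_F m ≤ (V_F - V_R) * Bq := by
    rw [Ffun_eq_intervalIntegral m hV]
    have h1 : ∫ s in (V_R - m)..(V_F - m), hh s ≤ ∫ s in (V_R - m)..(V_F - m), Bq := by
      apply intervalIntegral.integral_mono_on (by linarith) (hh_intInt _ _)
        (intervalIntegrable_const)
      intro s hs
      exact (hh_strictMono.le_iff_le.mpr hs.2)
    have h2 : ∫ s in (V_R - m)..(V_F - m), (Bq : ℝ) = (V_F - m - (V_R - m)) * Bq := by
      rw [intervalIntegral.integral_const, smul_eq_mul]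
    calc ∫ s in (V_R - m)..(V_F - m), hh s ≤ (V_F - m - (V_R - m)) * Bq := by rw [← h2]; exact h1
      _ = (V_F - V_R) * Bq := by ring
  have hDeq : Dfun V_R V_F m = (-m) * (Bq - A) - Ffun V_R V_F m := by
    unfold Dfun Fd
    rw [hA, hB]
    ring
  rw [hDeq]
  have hBpos : 0 < Bq := hh_pos _
  have hApos : 0 < A := hh_pos _
  nlinarith

end Bifurcation

section Bifurcation2

variable {V_R V_F : ℝ}

lemma exists_mdagger (hV : V_R < V_F) :
    ∃ md < 0, Dfun V_R V_F md = 0 := by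
  obtain ⟨m₁, hm₁, hDpos⟩ := exists_Dfun_pos hV
  have hcont : ContinuousOn (Dfun V_R V_F) (Set.Icc m₁ 0) := (Dfun_cont hV).continuousOn
  have hsub := intermediate_value_Ioo' hm₁.le hcont
  have h0 : (0:ℝ) ∈ Set.Ioo (Dfun V_R V_F 0) (Dfun V_R V_F m₁) :=
    ⟨Dfun_zero_neg hV, hDpos⟩
  obtain ⟨md, hmd, heq⟩ := hsub h0
  exact ⟨md, hmd.2, heq⟩

/-- `φ(m) = m · F(m)`, the map sending `m` to the corresponding `b`. -/
noncomputable def phi (V_R V_F m : ℝ) : ℝ := m * Ffun V_R V_F m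

lemma phi_strictMonoOn (hV : V_R < V_F) : StrictMonoOn (phi V_R V_F) (Set.Iic 0) := by
  apply strictMonoOn_of_deriv_pos (convex_Iic 0)
  · exact (continuous_id.mul (Ffun_cont hV)).continuousOn
  · intro m hm
    rw [interior_Iic] at hm
    have hd : HasDerivAt (phi V_R V_F) (Ffun V_R V_F m + m * Fd V_R V_F m) m := by
      have := (hasDerivAt_id m).mul (Ffun_hasDeriv hV m)
      refine this.congr_deriv ?_
      simp only [id]
      ring
    rw [hd.deriv]
    have h1 := Ffun_pos hV m
    have h2 := Fd_neg hV m
    nlinarith [mul_pos_of_neg_of_neg (show m < 0 from hm) h2]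

end Bifurcation2

section Dynamics

/-- Local asymptotic stability of a fixed point when `|f'(p)| < 1`. -/
lemma stable_fixed_point (f fd : ℝ → ℝ) (p : ℝ) (hfp : f p = p)
    (hd : ∀ x, HasDerivAt f (fd x) x) (hc : Continuous fd) (hlt : |fd p| < 1) :
    ∃ δ : ℝ, 0 < δ ∧ ∀ Nseq : ℕ → ℝ, (∀ k, Nseq (k + 1) = f (Nseq k)) →
      |Nseq 0 - p| < δ → Tendsto Nseq atTop (𝓝 p) := by
  set q : ℝ := (1 + |fd p|) / 2 with hq
  have hq0 : 0 ≤ q := by positivity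
  have hq1 : q < 1 := by rw [hq]; linarith
  have hltq : |fd p| < q := by rw [hq]; linarith
  obtain ⟨ε, hε, hball⟩ : ∃ ε > 0, ∀ x ∈ Metric.ball p ε, |fd x| < q := by
    have hopen : IsOpen {x : ℝ | |fd x| < q} := by
      have : Continuous fun x => |fd x| := hc.abs
      exact isOpen_lt this continuous_const
    obtain ⟨ε, hε, hsub⟩ := Metric.isOpen_iff.mp hopen p hltq
    exact ⟨ε, hε, fun x hx => hsub hx⟩
  set δ : ℝ := ε / 2 with hδ
  have hδpos : 0 < δ := by positivity
  have hsubset : Metric.closedBall p δ ⊆ Metric.ball p ε := by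
    apply Metric.closedBall_subset_ball
    rw [hδ]; linarith
  have hkey : ∀ x ∈ Metric.closedBall p δ, |f x - p| ≤ q * |x - p| := by
    intro x hx
    have hconv : Convex ℝ (Metric.closedBall p δ) := convex_closedBall p δ
    have hderivs : ∀ y ∈ Metric.closedBall p δ,
        HasDerivWithinAt f (fd y) (Metric.closedBall p δ) y :=
      fun y _ => (hd y).hasDerivWithinAt
    have hbound : ∀ y ∈ Metric.closedBall p δ, ‖fd y‖ ≤ q :=
      fun y hy => (hball y (hsubset hy)).le
    have hmem : p ∈ Metric.closedBall p δ := Metric.mem_closedBall_self hδpos.le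
    have := hconv.norm_image_sub_le_of_norm_hasDerivWithin_le hderivs hbound hmem hx
    rw [hfp] at this
    simpa [Real.norm_eq_abs] using this
  refine ⟨δ, hδpos, ?_⟩
  intro Nseq hrec h0
  have hind : ∀ k, Nseq k ∈ Metric.closedBall p δ ∧ |Nseq k - p| ≤ q ^ k * |Nseq 0 - p| := by
    intro k
    induction k with
    | zero =>
      constructor
      · rw [Metric.mem_closedBall, Real.dist_eq]; exact h0.le
      · simp
    | succ k ih =>
      obtain ⟨hmem, hbd⟩ := ih
      have h1 : |Nseq (k + 1) - p| ≤ q * |Nseq k - p| := by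
        rw [hrec k]; exact hkey _ hmem
      have h2 : |Nseq (k + 1) - p| ≤ q ^ (k + 1) * |Nseq 0 - p| := by
        calc |Nseq (k + 1) - p| ≤ q * |Nseq k - p| := h1
          _ ≤ q * (q ^ k * |Nseq 0 - p|) := mul_le_mul_of_nonneg_left hbd hq0
          _ = q ^ (k + 1) * |Nseq 0 - p| := by ring
      refine ⟨?_, h2⟩
      rw [Metric.mem_closedBall, Real.dist_eq]
      have h3 : q ^ (k + 1) ≤ 1 := pow_le_one₀ hq0 hq1.le
      calc |Nseq (k + 1) - p| ≤ q ^ (k + 1) * |Nseq 0 - p| := h2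
        _ ≤ 1 * |Nseq 0 - p| := mul_le_mul_of_nonneg_right h3 (abs_nonneg _)
        _ ≤ δ := by rw [one_mul]; exact h0.le
  rw [tendsto_iff_dist_tendsto_zero]
  apply squeeze_zero (g := fun k => q ^ k * |Nseq 0 - p|) (fun k => dist_nonneg)
  · intro k
    rw [Real.dist_eq]
    exact (hind k).2
  · have := (tendsto_pow_atTop_nhds_zero_of_lt_one hq0 hq1).mul_const (|Nseq 0 - p|)
    simpa using this

/-- Convergence to a 2-cycle when `f'(p) < -1`. -/
lemma two_cycle_conv (f fd : ℝ → ℝ) (p : ℝ)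
    (hd : ∀ x, HasDerivAt f (fd x) x) (hc : Continuous fd)
    (hanti : StrictAnti f) (hposf : ∀ x : ℝ, 0 < f x)
    (B : ℝ) (hB : ∀ x : ℝ, 0 ≤ x → f x ≤ B)
    (hfp : f p = p) (hslope : fd p < -1)
    (Nseq : ℕ → ℝ) (h0 : 0 ≤ Nseq 0) (hne0 : Nseq 0 ≠ p)
    (hrec : ∀ k, Nseq (k + 1) = f (Nseq k)) :
    ∃ z : ℝ, f (f z) = z ∧ z ≠ p ∧ 0 < z ∧
      Tendsto (fun k => Nseq (2 * k)) atTop (𝓝 z) ∧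
      Tendsto (fun k => Nseq (2 * k + 1)) atTop (𝓝 (f z)) := by
  set g : ℝ → ℝ := fun x => f (f x) with hg
  have hgd : ∀ x, HasDerivAt g (fd (f x) * fd x) x := fun x => (hd (f x)).comp x (hd x)
  have hgc : Continuous g := by
    have hfc : Continuous f := continuous_iff_continuousAt.mpr fun x => (hd x).continuousAt
    exact hfc.comp hfc
  have hfc : Continuous f := continuous_iff_continuousAt.mpr fun x => (hd x).continuousAt
  have hgmono : StrictMono g := hanti.comp hanti
  have hgp : g p = p := by rw [hg]; simp [hfp]
  set x : ℕ → ℝ := fun k => Nseq (2 * k) with hx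
  have hxrec : ∀ k, x (k + 1) = g (x k) := by
    intro k
    have e1 : 2 * (k + 1) = 2 * k + 1 + 1 := by ring
    rw [hx]
    simp only
    rw [e1, hrec (2 * k + 1), hrec (2 * k)]
  have hNnn : ∀ k, 0 ≤ Nseq k := by
    intro k
    cases k with
    | zero => exact h0
    | succ k => rw [hrec k]; exact (hposf _).le
  have hNne : ∀ k, Nseq k ≠ p := by
    intro k
    induction k with
    | zero => exact hne0
    | succ k ih =>
      rw [hrec k]
      intro hcontra
      exact ih (hanti.injective (by rw [hcontra, hfp]))
  have hxbd : ∀ k, x k ≤ max B (x 0) := by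
    intro k
    cases k with
    | zero => exact le_max_right _ _
    | succ k =>
      have : x (k + 1) = f (Nseq (2 * k + 1)) := by
        rw [hxrec k, hg]
        simp only
        rw [hrec (2 * k)]
      rw [this]
      exact le_trans (hB _ (hNnn _)) (le_max_left _ _)
  -- the expansion estimate near p
  have hgdp : 1 < fd (f p) * fd p := by
    rw [hfp]; nlinarith
  obtain ⟨ε, hε, hexp⟩ : ∃ ε > 0, ∀ y ∈ Metric.ball p ε, 1 < fd (f y) * fd y := by
    have hopen : IsOpen {y : ℝ | 1 < fd (f y) * fd y} :=
      isOpen_lt continuous_const ((hc.comp hfc).mul hc)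
    obtain ⟨ε, hε, hsub⟩ := Metric.isOpen_iff.mp hopen p hgdp
    exact ⟨ε, hε, fun y hy => hsub hy⟩
  -- we now distinguish the monotone and antitone cases
  have main : ∀ z : ℝ, Tendsto x atTop (𝓝 z) → (Monotone x ∨ Antitone x) →
      f (f z) = z ∧ z ≠ p ∧ 0 < z ∧
      Tendsto (fun k => Nseq (2 * k)) atTop (𝓝 z) ∧
      Tendsto (fun k => Nseq (2 * k + 1)) atTop (𝓝 (f z)) := by
    intro z hz hmono
    have hgz : g z = z := by
      have h1 : Tendsto (fun k => x (k + 1)) atTop (𝓝 z) :=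
        hz.comp (tendsto_add_atTop_nat 1)
      have h2 : Tendsto (fun k => g (x k)) atTop (𝓝 (g z)) :=
        (hgc.continuousAt).tendsto.comp hz
      have h3 : (fun k => x (k + 1)) = fun k => g (x k) := funext hxrec
      rw [h3] at h1
      exact tendsto_nhds_unique h2 h1
    have hznn : 0 ≤ z := ge_of_tendsto hz (Eventually.of_forall (fun k => hNnn (2 * k)))
    have hzpos : 0 < z := by
      rcases hznn.eq_or_lt' with h | h
      · exact absurd (h ▸ hgz) (hposf (f 0)).ne'
      · exact h
    have hzne : z ≠ p := by
      intro hzp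
      subst hzp
      obtain ⟨k₀, hk₀⟩ := Metric.tendsto_atTop.mp hz ε hε
      have hk := hk₀ k₀ le_rfl
      rw [Real.dist_eq] at hk
      rcases hmono with hM | hA
      · have hle : ∀ k, x k ≤ z := fun k => hM.ge_of_tendsto hz k
        have hlt : x k₀ < z := lt_of_le_of_ne (hle k₀) (hNne (2 * k₀))
        obtain ⟨c, hcmem, hceq⟩ := exists_hasDerivAt_eq_slope g (fun y => fd (f y) * fd y)
          hlt hgc.continuousOn (fun y _ => hgd y)
        have hcball : c ∈ Metric.ball z ε := by
          rw [Metric.mem_ball, Real.dist_eq]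
          rw [abs_of_nonpos (by linarith [hcmem.2] : c - z ≤ 0)]
          rw [abs_of_nonpos (by linarith : x k₀ - z ≤ 0)] at hk
          linarith [hcmem.1]
        have hgt := hexp c hcball
        rw [hceq, hgz, ← hxrec k₀] at hgt
        have hd1 : 0 < z - x k₀ := by linarith
        have h5 : z - x k₀ < z - x (k₀ + 1) := (one_lt_div hd1).mp hgt
        have h6 : x k₀ ≤ x (k₀ + 1) := hM (Nat.le_succ k₀)
        linarith
      · have hle : ∀ k, z ≤ x k := fun k => hA.le_of_tendsto hz k
        have hlt : z < x k₀ := lt_of_le_of_ne (hle k₀) (Ne.symm (hNne (2 * k₀)))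
        obtain ⟨c, hcmem, hceq⟩ := exists_hasDerivAt_eq_slope g (fun y => fd (f y) * fd y)
          hlt hgc.continuousOn (fun y _ => hgd y)
        have hcball : c ∈ Metric.ball z ε := by
          rw [Metric.mem_ball, Real.dist_eq]
          rw [abs_of_nonneg (by linarith [hcmem.1] : 0 ≤ c - z)]
          rw [abs_of_nonneg (by linarith : 0 ≤ x k₀ - z)] at hk
          linarith [hcmem.2]
        have hgt := hexp c hcball
        rw [hceq, hgz, ← hxrec k₀] at hgt
        have hd1 : 0 < x k₀ - z := by linarith
        have h5 : x k₀ - z < x (k₀ + 1) - z := (one_lt_div hd1).mp hgt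
        have h6 : x (k₀ + 1) ≤ x k₀ := hA (Nat.le_succ k₀)
        linarith
    have hodd : Tendsto (fun k => Nseq (2 * k + 1)) atTop (𝓝 (f z)) := by
      have heq : (fun k => Nseq (2 * k + 1)) = fun k => f (x k) :=
        funext fun k => hrec (2 * k)
      rw [heq]
      exact (hfc.continuousAt.tendsto).comp hz
    exact ⟨hgz, hzne, hzpos, hz, hodd⟩
  rcases le_total (x 0) (x 1) with h01 | h01
  · have hstep : ∀ k, x k ≤ x (k + 1) := by
      intro k
      induction k with
      | zero => exact h01
      | succ k ih =>
        calc x (k + 1) = g (x k) := hxrec k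
          _ ≤ g (x (k + 1)) := hgmono.monotone ih
          _ = x (k + 2) := (hxrec (k + 1)).symm
    have hM := monotone_nat_of_le_succ hstep
    have hbdd : BddAbove (Set.range x) := by
      refine ⟨max B (x 0), ?_⟩
      rintro y ⟨k, rfl⟩
      exact hxbd k
    have hz := tendsto_atTop_ciSup hM hbdd
    exact ⟨_, main _ hz (Or.inl hM)⟩
  · have hstep : ∀ k, x (k + 1) ≤ x k := by
      intro k
      induction k with
      | zero => exact h01
      | succ k ih =>
        calc x (k + 2) = g (x (k + 1)) := hxrec (k + 1)
          _ ≤ g (x k) := hgmono.monotone ih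
          _ = x (k + 1) := (hxrec k).symm
    have hA := antitone_nat_of_succ_le hstep
    have hbdd : BddBelow (Set.range x) := by
      refine ⟨0, ?_⟩
      rintro y ⟨k, rfl⟩
      exact hNnn _
    have hz := tendsto_atTop_ciInf hA hbdd
    exact ⟨_, main _ hz (Or.inr hA)⟩

end Dynamics


/-- Step 2 of Theorem 2.5: there is a bifurcation value `b* < 0` such that for
`b* < b < 0` the slope of `f_b = 1/I(b,·)` at the unique fixed point `N_b*` lies in
`(−1, 0)` and `N_b*` is locally asymptotically stable for the recurrence, while for
`b < b*` the slope is `< −1` and every firing rate sequence not starting at `N_b*`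
approaches a 2-cycle `{N⁻, N⁺}` surrounding `N_b*`. -/
theorem exists_bifurcation_value (V_R V_F : ℝ) (hV : V_R < V_F)
    (Nstar : ℝ → ℝ)
    (hNstar : ∀ b : ℝ, b < 0 →
      0 < Nstar b ∧ Nstar b * Ifun V_R V_F b (Nstar b) = 1 ∧
      ∀ N : ℝ, 0 < N → N * Ifun V_R V_F b N = 1 → N = Nstar b) :
    ∃ bstar : ℝ, bstar < 0 ∧
      (∀ b : ℝ, bstar < b → b < 0 →
        (-1 < deriv (fun N => 1 / Ifun V_R V_F b N) (Nstar b) ∧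
          deriv (fun N => 1 / Ifun V_R V_F b N) (Nstar b) < 0) ∧
        ∃ δ : ℝ, 0 < δ ∧ ∀ Nseq : ℕ → ℝ,
          (∀ k : ℕ, Nseq (k + 1) = 1 / Ifun V_R V_F b (Nseq k)) →
          |Nseq 0 - Nstar b| < δ →
          Tendsto Nseq atTop (nhds (Nstar b))) ∧
      (∀ b : ℝ, b < bstar →
        deriv (fun N => 1 / Ifun V_R V_F b N) (Nstar b) < -1 ∧
        ∀ Nseq : ℕ → ℝ, 0 ≤ Nseq 0 → Nseq 0 ≠ Nstar b →
          (∀ k : ℕ, Nseq (k + 1) = 1 / Ifun V_R V_F b (Nseq k)) →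
          ∃ Nminus Nplus : ℝ, Nminus ≠ Nplus ∧
            min Nminus Nplus < Nstar b ∧ Nstar b < max Nminus Nplus ∧
            1 / Ifun V_R V_F b Nminus = Nplus ∧
            1 / Ifun V_R V_F b Nplus = Nminus ∧
            ((Tendsto (fun k => Nseq (2 * k)) atTop (nhds Nminus) ∧
                Tendsto (fun k => Nseq (2 * k + 1)) atTop (nhds Nplus)) ∨
              (Tendsto (fun k => Nseq (2 * k)) atTop (nhds Nplus) ∧
                Tendsto (fun k => Nseq (2 * k + 1)) atTop (nhds Nminus)))) := by
  have hIeq : ∀ b N : ℝ, Ifun V_R V_F b N = Ffun V_R V_F (b * N) := fun b N => rfl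
  obtain ⟨md, hmd_neg, hmd_zero⟩ := exists_mdagger hV
  have hmd_mem : md ∈ Set.Iic (0:ℝ) := le_of_lt hmd_neg
  -- shared facts for an arbitrary b < 0
  have shared : ∀ b : ℝ, b < 0 →
      HasDerivAt (fun N => 1 / Ifun V_R V_F b N)
        (-Nstar b * Dfun V_R V_F (b * Nstar b) - 1) (Nstar b) ∧
      phi V_R V_F (b * Nstar b) = b ∧ b * Nstar b < 0 ∧
      -Nstar b * Dfun V_R V_F (b * Nstar b) - 1 < 0 := by
    intro b hb
    obtain ⟨hNpos, hfix, huniq⟩ := hNstar b hb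
    rw [hIeq] at hfix
    set Ns := Nstar b with hNs
    set mb := b * Ns with hmb
    have hmb_neg : mb < 0 := mul_neg_of_neg_of_pos hb hNpos
    have hFpos : 0 < Ffun V_R V_F mb := Ffun_pos hV mb
    have hFm : Ffun V_R V_F mb = Ns⁻¹ := by
      field_simp
      linarith [hfix]
    have hinner : ∀ N : ℝ, HasDerivAt (fun N => Ffun V_R V_F (b * N))
        (Fd V_R V_F (b * N) * b) N := by
      intro N
      have h1 : HasDerivAt (fun N : ℝ => b * N) b N := by
        simpa using (hasDerivAt_id N).const_mul b
      exact HasDerivAt.comp N (Ffun_hasDeriv hV (b * N)) h1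
    have hdiv : HasDerivAt (fun N => 1 / Ifun V_R V_F b N)
        (-(Fd V_R V_F mb * b) / (Ffun V_R V_F mb) ^ 2) Ns := by
      have h2 := (hinner Ns).inv (by rw [← hmb]; exact hFpos.ne')
      simp only [one_div]
      rw [hmb]
      exact h2
    have hval : -(Fd V_R V_F mb * b) / (Ffun V_R V_F mb) ^ 2
        = -Ns * Dfun V_R V_F mb - 1 := by
      rw [hFm]
      unfold Dfun
      rw [hFm, hmb]
      field_simp
      ring
    have hphi : phi V_R V_F mb = b := by
      unfold phi
      calc mb * Ffun V_R V_F mb = b * (Ns * Ffun V_R V_F mb) := by rw [hmb]; ring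
        _ = b := by rw [hfix, mul_one]
    have hSneg : -Ns * Dfun V_R V_F mb - 1 < 0 := by
      rw [← hval]
      have h3 : 0 < Fd V_R V_F mb * b := mul_pos_of_neg_of_neg (Fd_neg hV mb) hb
      apply div_neg_of_neg_of_pos
      · linarith
      · positivity
    exact ⟨hval ▸ hdiv, hphi, hmb_neg, hSneg⟩
  refine ⟨phi V_R V_F md, mul_neg_of_neg_of_pos hmd_neg (Ffun_pos hV md), ?_, ?_⟩
  · -- the stable regime
    intro b hb1 hb2
    obtain ⟨hNpos, hfix, huniq⟩ := hNstar b hb2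
    obtain ⟨hderiv, hphi, hmb_neg, hSneg⟩ := shared b hb2
    set Ns := Nstar b
    set mb := b * Ns with hmb
    have hmb_mem : mb ∈ Set.Iic (0:ℝ) := le_of_lt hmb_neg
    have hmlt : md < mb := by
      apply ((phi_strictMonoOn hV).lt_iff_lt hmd_mem hmb_mem).mp
      rw [hphi]
      exact hb1
    have hD_neg : Dfun V_R V_F mb < 0 := by
      have := (Dfun_strictAntiOn hV) hmd_mem hmb_mem hmlt
      rw [hmd_zero] at this
      exact this
    have hslope_gt : -1 < -Ns * Dfun V_R V_F mb - 1 := by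
      nlinarith [hNpos, hD_neg]
    constructor
    · rw [hderiv.deriv]
      exact ⟨hslope_gt, hSneg⟩
    · -- stability
      rw [hIeq] at hfix
      have hFpos : 0 < Ffun V_R V_F mb := Ffun_pos hV mb
      have hfp : (fun N => 1 / Ifun V_R V_F b N) Ns = Ns := by
        show 1 / Ffun V_R V_F (b * Ns) = Ns
        rw [← hmb]
        field_simp
        linarith [hfix]
      -- global derivative function
      have hinner : ∀ N : ℝ, HasDerivAt (fun N => Ffun V_R V_F (b * N))
          (Fd V_R V_F (b * N) * b) N := by
        intro N
        have h1 : HasDerivAt (fun N : ℝ => b * N) b N := by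
          simpa using (hasDerivAt_id N).const_mul b
        exact HasDerivAt.comp N (Ffun_hasDeriv hV (b * N)) h1
      set fdB : ℝ → ℝ := fun N => -(Fd V_R V_F (b * N) * b) / (Ffun V_R V_F (b * N)) ^ 2
        with hfdB
      have hdall : ∀ N, HasDerivAt (fun N => 1 / Ifun V_R V_F b N) (fdB N) N := by
        intro N
        have h2 := (hinner N).inv (Ffun_pos hV (b * N)).ne'
        simp only [one_div]
        exact h2
      have hcont : Continuous fdB := by
        rw [hfdB]
        apply Continuous.div
        · exact (Fd_cont.comp (continuous_const.mul continuous_id)).mul continuous_const |>.neg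
        · exact ((Ffun_cont hV).comp (continuous_const.mul continuous_id)).pow 2
        · intro N
          exact pow_ne_zero 2 (Ffun_pos hV (b * N)).ne'
      have hlt : |fdB Ns| < 1 := by
        have he : fdB Ns = -Ns * Dfun V_R V_F mb - 1 := by
          have h1 := (hdall Ns).deriv
          have h2 := hderiv.deriv
          rw [h1] at h2
          exact h2
        rw [he, abs_lt]
        constructor <;> linarith
      exact stable_fixed_point (fun N => 1 / Ifun V_R V_F b N) fdB Ns hfp hdall hcont hlt
  · -- the 2-cycle regime
    intro b hb1
    have hb2 : b < 0 := lt_trans hb1 (mul_neg_of_neg_of_pos hmd_neg (Ffun_pos hV md))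
    obtain ⟨hNpos, hfix, huniq⟩ := hNstar b hb2
    obtain ⟨hderiv, hphi, hmb_neg, hSneg⟩ := shared b hb2
    set Ns := Nstar b
    set mb := b * Ns with hmb
    have hmb_mem : mb ∈ Set.Iic (0:ℝ) := le_of_lt hmb_neg
    have hmlt : mb < md := by
      apply ((phi_strictMonoOn hV).lt_iff_lt hmb_mem hmd_mem).mp
      rw [hphi]
      exact hb1
    have hD_pos : 0 < Dfun V_R V_F mb := by
      have := (Dfun_strictAntiOn hV) hmb_mem hmd_mem hmlt
      rw [hmd_zero] at this
      exact this
    have hslope_lt : -Ns * Dfun V_R V_F mb - 1 < -1 := by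
      nlinarith [hNpos, hD_pos]
    have hslope_deriv : deriv (fun N => 1 / Ifun V_R V_F b N) Ns
        = -Ns * Dfun V_R V_F mb - 1 := hderiv.deriv
    refine ⟨by rw [hslope_deriv]; exact hslope_lt, ?_⟩
    intro Nseq hNseq0 hNseqne hrec
    rw [hIeq] at hfix
    have hFpos : ∀ m : ℝ, 0 < Ffun V_R V_F m := Ffun_pos hV
    have hfp : (fun N => 1 / Ifun V_R V_F b N) Ns = Ns := by
      show 1 / Ffun V_R V_F (b * Ns) = Ns
      rw [← hmb, div_eq_iff (Ffun_pos hV mb).ne']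
      linarith [hfix]
    have hinner : ∀ N : ℝ, HasDerivAt (fun N => Ffun V_R V_F (b * N))
        (Fd V_R V_F (b * N) * b) N := by
      intro N
      have h1 : HasDerivAt (fun N : ℝ => b * N) b N := by
        simpa using (hasDerivAt_id N).const_mul b
      exact HasDerivAt.comp N (Ffun_hasDeriv hV (b * N)) h1
    set fdB : ℝ → ℝ := fun N => -(Fd V_R V_F (b * N) * b) / (Ffun V_R V_F (b * N)) ^ 2
      with hfdB
    have hdall : ∀ N, HasDerivAt (fun N => 1 / Ifun V_R V_F b N) (fdB N) N := by
      intro N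
      have h2 := (hinner N).inv (hFpos (b * N)).ne'
      simp only [one_div]
      exact h2
    have hcont : Continuous fdB := by
      rw [hfdB]
      apply Continuous.div
      · exact (Fd_cont.comp (continuous_const.mul continuous_id)).mul continuous_const |>.neg
      · exact ((Ffun_cont hV).comp (continuous_const.mul continuous_id)).pow 2
      · intro N
        exact pow_ne_zero 2 (hFpos (b * N)).ne'
    have hslopeval : fdB Ns = -Ns * Dfun V_R V_F mb - 1 := by
      have h1 := (hdall Ns).deriv
      rw [h1] at hslope_deriv
      exact hslope_deriv
    have hanti : StrictAnti (fun N => 1 / Ifun V_R V_F b N) := by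
      intro u v huv
      show 1 / Ffun V_R V_F (b * v) < 1 / Ffun V_R V_F (b * u)
      apply one_div_lt_one_div_of_lt (hFpos (b * u))
      exact Ffun_strictAnti hV (by nlinarith)
    have hposf : ∀ N : ℝ, 0 < (fun N => 1 / Ifun V_R V_F b N) N := by
      intro N
      show 0 < 1 / Ffun V_R V_F (b * N)
      exact one_div_pos.mpr (hFpos _)
    have hBnd : ∀ N : ℝ, 0 ≤ N → (fun N => 1 / Ifun V_R V_F b N) N
        ≤ 1 / Ffun V_R V_F 0 := by
      intro N hN
      show 1 / Ffun V_R V_F (b * N) ≤ 1 / Ffun V_R V_F 0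
      apply one_div_le_one_div_of_le (hFpos 0)
      apply (Ffun_strictAnti hV).antitone
      exact mul_nonpos_of_nonpos_of_nonneg hb2.le hN
    obtain ⟨z, hzfix, hzne, hzpos, heven, hodd⟩ :=
      two_cycle_conv (fun N => 1 / Ifun V_R V_F b N) fdB Ns hdall hcont hanti hposf
        (1 / Ffun V_R V_F 0) hBnd hfp (by rw [hslopeval]; exact hslope_lt)
        Nseq hNseq0 hNseqne hrec
    set f : ℝ → ℝ := fun N => 1 / Ifun V_R V_F b N with hf
    have hfzne : f z ≠ z := by
      intro hcontra
      apply hzne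
      apply huniq z hzpos
      rw [hIeq]
      have h9 : 1 / Ffun V_R V_F (b * z) = z := hcontra
      rw [div_eq_iff (hFpos (b * z)).ne'] at h9
      show z * Ffun V_R V_F (b * z) = 1
      linarith [h9]
    refine ⟨z, f z, fun h => hfzne h.symm, ?_, ?_, rfl, hzfix, Or.inl ⟨heven, hodd⟩⟩
    · rcases lt_or_gt_of_ne hzne with h | h
      · calc min z (f z) ≤ z := min_le_left _ _
          _ < Ns := h
      · have : f z < f Ns := hanti h
        rw [hfp] at this
        calc min z (f z) ≤ f z := min_le_right _ _
          _ < Ns := this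
    · rcases lt_or_gt_of_ne hzne with h | h
      · have : f Ns < f z := hanti h
        rw [hfp] at this
        calc Ns < f z := this
          _ ≤ max z (f z) := le_max_right _ _
      · calc Ns < z := h
          _ ≤ max z (f z) := le_max_left _ _
end

section
/- For every N > 0 the partial derivative of I with respect to b satisfies ∂_b I(b,N) = −N ∫_0^∞ e^{−s²/2} e^{−sbN} (e^{s V_F} − e^{s V_R}) ds < 0; in particular, for each fixed N > 0 the map b ↦ I(b,N) is strictly decreasing and b ↦ 1/I(b,N) is strictly increasing. -/
open MeasureTheory Real Filter

open Set

lemma int_exp_quad (a : ℝ) : Integrable (fun s : ℝ => Real.exp (-s^2/2 + s*a)) := by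
  have h := (integrable_exp_neg_mul_sq (by norm_num : (0:ℝ) < 1/2)).comp_sub_right a
  have h2 := h.const_mul (Real.exp (a^2/2))
  refine h2.congr ?_
  filter_upwards with s
  rw [← Real.exp_add]
  ring_nf

lemma step2 {V_R V_F : ℝ} (hV : V_R ≤ V_F) (c : ℝ) :
    (∫ w in Ioc V_R V_F, ∫ s in Ioi (0:ℝ), Real.exp (-s^2/2 + s*(w - c)))
      = ∫ s in Ioi (0:ℝ),
          Real.exp (-s^2/2) * Real.exp (-(s*c)) * (Real.exp (s*V_F) - Real.exp (s*V_R)) / s := by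
  set g2 : ℝ × ℝ → ℝ := fun p => Real.exp (-p.2^2/2 + p.2*(p.1 - c)) with hg2
  set S2 : Set (ℝ × ℝ) := {p : ℝ × ℝ | (V_R < p.1 ∧ p.1 ≤ V_F) ∧ 0 < p.2} with hS2def
  have hS2 : MeasurableSet S2 := by
    apply MeasurableSet.inter
    · exact ((measurableSet_lt measurable_const measurable_fst).inter
        (measurableSet_le measurable_fst measurable_const))
    · exact measurableSet_lt measurable_const measurable_snd
  set f2 : ℝ → ℝ → ℝ := fun w s => Set.indicator S2 g2 (w, s) with hf2def
  have hfw_mem : ∀ w ∈ Ioc V_R V_F, f2 w = Set.indicator (Ioi (0:ℝ))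
      (fun s => Real.exp (-s^2/2 + s*(w - c))) := by
    intro w hw; funext s
    simp only [hf2def, hS2def, Set.indicator, mem_setOf_eq, mem_Ioi, hg2]
    rw [mem_Ioc] at hw
    by_cases h2 : 0 < s <;> simp [hw, h2]
  have hfw_not : ∀ w ∉ Ioc V_R V_F, f2 w = fun _ => (0:ℝ) := by
    intro w hw; funext s
    apply Set.indicator_of_notMem
    simp only [hS2def, mem_setOf_eq]
    rw [mem_Ioc] at hw
    exact fun h => hw h.1
  have hint1 : ∀ w, Integrable (f2 w) := by
    intro w
    by_cases hw : w ∈ Ioc V_R V_F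
    · rw [hfw_mem w hw, integrable_indicator_iff measurableSet_Ioi]
      exact (int_exp_quad (w - c)).integrableOn
    · rw [hfw_not w hw]
      exact integrable_zero _ _ _
  have hIw : ∀ w, (∫ s, f2 w s) = Set.indicator (Ioc V_R V_F)
      (fun w' => ∫ s in Ioi (0:ℝ), Real.exp (-s^2/2 + s*(w' - c))) w := by
    intro w
    by_cases hw : w ∈ Ioc V_R V_F
    · rw [Set.indicator_of_mem hw]
      rw [show (fun s => f2 w s) = f2 w from rfl, hfw_mem w hw,
        integral_indicator measurableSet_Ioi]
    · rw [Set.indicator_of_notMem hw]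
      rw [show (fun s => f2 w s) = f2 w from rfl, hfw_not w hw]
      simp
  have hmono : Monotone (fun w => ∫ s in Ioi (0:ℝ), Real.exp (-s^2/2 + s*(w - c))) := by
    intro w1 w2 h
    apply setIntegral_mono_on (int_exp_quad (w1 - c)).integrableOn
      (int_exp_quad (w2 - c)).integrableOn measurableSet_Ioi
    intro s hs
    apply Real.exp_le_exp.2
    have : s * (w1 - c) ≤ s * (w2 - c) :=
      mul_le_mul_of_nonneg_left (by linarith) (le_of_lt hs)
    linarith
  have hnn2 : ∀ w, 0 ≤ ∫ s in Ioi (0:ℝ), Real.exp (-s^2/2 + s*(w - c)) :=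
    fun w => integral_nonneg fun s => (Real.exp_pos _).le
  set A : ℝ := ∫ s in Ioi (0:ℝ), Real.exp (-s^2/2 + s*(V_F - c)) with hA
  have hfnn : ∀ w s, 0 ≤ f2 w s := fun w s => Set.indicator_nonneg (fun p _ => (Real.exp_pos _).le) _
  have hInt2 : Integrable (fun w => ∫ s, ‖f2 w s‖) := by
    have heq : (fun w => ∫ s, ‖f2 w s‖) = fun w => Set.indicator (Ioc V_R V_F)
        (fun w' => ∫ s in Ioi (0:ℝ), Real.exp (-s^2/2 + s*(w' - c))) w := by
      funext w
      rw [← hIw]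
      congr 1; funext s; exact Real.norm_of_nonneg (hfnn w s)
    rw [heq]
    apply Integrable.mono' (g := Set.indicator (Ioc V_R V_F) (fun _ => A))
    · exact (integrable_indicator_iff measurableSet_Ioc).2
        (integrableOn_const (by rw [Real.volume_Ioc]; exact ENNReal.ofReal_ne_top))
    · exact (hmono.measurable.indicator measurableSet_Ioc).aestronglyMeasurable
    · filter_upwards with w
      by_cases hw : w ∈ Ioc V_R V_F
      · rw [Set.indicator_of_mem hw, Set.indicator_of_mem hw,
          Real.norm_of_nonneg (hnn2 w)]
        exact hmono (by exact hw.2)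
      · rw [Set.indicator_of_notMem hw, Set.indicator_of_notMem hw]; simp
  have hIntf2 : Integrable (Function.uncurry f2) (volume.prod volume) := by
    rw [integrable_prod_iff]
    · exact ⟨ae_of_all _ hint1, hInt2⟩
    · have : Function.uncurry f2 = Set.indicator S2 g2 := by
        funext p; simp [hf2def, Function.uncurry]
      rw [this]
      exact ((by fun_prop : Continuous g2).measurable.indicator hS2).aestronglyMeasurable
  have hswap := integral_integral_swap hIntf2
  have h1 : (∫ w in Ioc V_R V_F, ∫ s in Ioi (0:ℝ), Real.exp (-s^2/2 + s*(w - c)))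
      = ∫ w, ∫ s, f2 w s := by
    rw [show (∫ w, ∫ s, f2 w s) = ∫ w, Set.indicator (Ioc V_R V_F)
        (fun w' => ∫ s in Ioi (0:ℝ), Real.exp (-s^2/2 + s*(w' - c))) w from by
      congr 1; funext w; exact hIw w]
    rw [integral_indicator measurableSet_Ioc]
  have h2 : (∫ s, ∫ w, f2 w s) = ∫ s in Ioi (0:ℝ),
      Real.exp (-s^2/2) * Real.exp (-(s*c)) * (Real.exp (s*V_F) - Real.exp (s*V_R)) / s := by
    have hWs : ∀ s, (∫ w, f2 w s) = Set.indicator (Ioi (0:ℝ))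
        (fun s' => ∫ w in Ioc V_R V_F, Real.exp (-s'^2/2 + s'*(w - c))) s := by
      intro s
      by_cases hs : s ∈ Ioi (0:ℝ)
      · rw [Set.indicator_of_mem hs]
        have : (fun w => f2 w s) = Set.indicator (Ioc V_R V_F)
            (fun w => Real.exp (-s^2/2 + s*(w - c))) := by
          funext w
          simp only [hf2def, hS2def, Set.indicator, mem_setOf_eq, mem_Ioc, hg2]
          by_cases h1 : V_R < w ∧ w ≤ V_F <;> simp [h1, hs.out]
        rw [this, integral_indicator measurableSet_Ioc]
      · rw [Set.indicator_of_notMem hs]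
        have : (fun w => f2 w s) = fun _ => (0:ℝ) := by
          funext w
          apply Set.indicator_of_notMem
          simp only [hS2def, mem_setOf_eq, not_and_or]
          exact Or.inr hs
        rw [this]; simp
    rw [show (∫ s, ∫ w, f2 w s) = ∫ s, Set.indicator (Ioi (0:ℝ))
        (fun s' => ∫ w in Ioc V_R V_F, Real.exp (-s'^2/2 + s'*(w - c))) s from by
      congr 1; funext s; exact hWs s]
    rw [integral_indicator measurableSet_Ioi]
    apply setIntegral_congr_fun measurableSet_Ioi
    intro s hs
    have hs0 : (0:ℝ) < s := hs
    simp only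
    rw [← intervalIntegral.integral_of_le hV]
    have : ∀ w, Real.exp (-s^2/2 + s*(w - c))
        = Real.exp (-s^2/2 - s*c) * Real.exp (s * w) := by
      intro w; rw [← Real.exp_add]; congr 1; ring
    simp_rw [this]
    rw [intervalIntegral.integral_const_mul]
    rw [intervalIntegral.integral_comp_mul_left (fun u => Real.exp u) hs0.ne']
    rw [integral_exp, smul_eq_mul]
    rw [show (-s^2/2 - s*c) = (-s^2/2) + (-(s*c)) by ring, Real.exp_add]
    field_simp
  rw [h1, hswap, h2]


lemma gauss_int (c : ℝ) : Integrable (fun v : ℝ => Real.exp (-(v - c)^2/2)) := by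
  have h := (integrable_exp_neg_mul_sq (by norm_num : (0:ℝ) < 1/2)).comp_sub_right c
  refine h.congr ?_
  filter_upwards with v
  ring_nf

lemma step1 {V_R V_F : ℝ} (hV : V_R ≤ V_F) (c : ℝ) :
    (∫ v in Iic V_F, Real.exp (-(v - c)^2/2) *
        ∫ w in (max v V_R)..V_F, Real.exp ((w - c)^2/2))
      = ∫ w in Ioc V_R V_F, Real.exp ((w - c)^2/2) * ∫ v in Iio w, Real.exp (-(v - c)^2/2) := by
  set g1 : ℝ × ℝ → ℝ := fun p => Real.exp (-(p.1 - c)^2/2) * Real.exp ((p.2 - c)^2/2) with hg1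
  set S : Set (ℝ × ℝ) := {p | max p.1 V_R < p.2 ∧ p.2 ≤ V_F} with hSdef
  have hS : MeasurableSet S := by
    apply MeasurableSet.inter
    · exact measurableSet_lt (measurable_fst.max measurable_const) measurable_snd
    · exact measurableSet_le measurable_snd measurable_const
  set f : ℝ → ℝ → ℝ := fun v w => Set.indicator S g1 (v, w) with hfdef
  have hg1c : Continuous g1 := by fun_prop
  have hfv : ∀ v, f v = Set.indicator (Ioc (max v V_R) V_F)
      (fun w => Real.exp (-(v - c)^2/2) * Real.exp ((w - c)^2/2)) := by
    intro v; funext w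
    simp only [hfdef, Set.indicator, hSdef, mem_setOf_eq, mem_Ioc, hg1]
  have hint1 : ∀ v, Integrable (f v) := by
    intro v
    rw [hfv]
    rw [integrable_indicator_iff measurableSet_Ioc]
    exact (Continuous.integrableOn_Ioc (by fun_prop))
  have hH : ∀ v, (∫ w, f v w) = Real.exp (-(v - c)^2/2) *
      ∫ w in Ioc (max v V_R) V_F, Real.exp ((w - c)^2/2) := by
    intro v
    rw [hfv, integral_indicator measurableSet_Ioc, ← integral_const_mul]
  have hHnn : ∀ v, 0 ≤ ∫ w in Ioc (max v V_R) V_F, Real.exp ((w - c)^2/2) :=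
    fun v => integral_nonneg (fun w => (Real.exp_pos _).le)
  have hHanti : Antitone (fun v => ∫ w in Ioc (max v V_R) V_F, Real.exp ((w - c)^2/2)) := by
    intro v1 v2 h
    apply setIntegral_mono_set
    · exact Continuous.integrableOn_Ioc (by fun_prop)
    · filter_upwards with w using (Real.exp_pos _).le
    · exact HasSubset.Subset.eventuallyLE (Ioc_subset_Ioc_left (max_le_max h le_rfl))
  set K : ℝ := (|V_F - c| + |V_R - c|)^2/2 with hK
  have hbound : ∀ v, (∫ w in Ioc (max v V_R) V_F, Real.exp ((w - c)^2/2))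
      ≤ Real.exp K * (V_F - V_R) := by
    intro v
    have h1 : ∀ w ∈ Ioc (max v V_R) V_F, ‖Real.exp ((w - c)^2/2)‖ ≤ Real.exp K := by
      intro w hw
      rw [Real.norm_eq_abs, abs_of_pos (Real.exp_pos _), Real.exp_le_exp]
      apply div_le_div_of_nonneg_right ?_ (by norm_num)
      · apply sq_le_sq'
        · have : V_R - c ≤ w - c := by
            have := hw.1; have : V_R < w := lt_of_le_of_lt (le_max_right v V_R) this
            linarith
          calc -(|V_F - c| + |V_R - c|) ≤ -|V_R - c| := by
                have := abs_nonneg (V_F - c); linarith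
            _ ≤ V_R - c := neg_abs_le _
            _ ≤ w - c := this
        · have h2 : w - c ≤ V_F - c := by have := hw.2; linarith
          calc w - c ≤ V_F - c := h2
            _ ≤ |V_F - c| := le_abs_self _
            _ ≤ |V_F - c| + |V_R - c| := by have := abs_nonneg (V_R - c); linarith
    have h2 := norm_setIntegral_le_of_norm_le_const (C := Real.exp K)
        (s := Ioc (max v V_R) V_F) (μ := volume) (by
          rw [Real.volume_Ioc]; exact ENNReal.ofReal_lt_top) h1
    have h3 : (volume (Ioc (max v V_R) V_F)).toReal ≤ V_F - V_R := by
      rw [Real.volume_Ioc]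
      rcases le_total (max v V_R) V_F with h | h
      · rw [ENNReal.toReal_ofReal (by linarith)]
        have := le_max_right v V_R; linarith
      · rw [ENNReal.ofReal_eq_zero.2 (by linarith)]
        simpa using by linarith
    calc (∫ w in Ioc (max v V_R) V_F, Real.exp ((w - c)^2/2))
        ≤ ‖∫ w in Ioc (max v V_R) V_F, Real.exp ((w - c)^2/2)‖ := le_norm_self _
      _ ≤ Real.exp K * (volume (Ioc (max v V_R) V_F)).toReal := h2
      _ ≤ Real.exp K * (V_F - V_R) := by
          apply mul_le_mul_of_nonneg_left h3 (Real.exp_pos _).le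
  have hfnn : ∀ v w, 0 ≤ f v w := by
    intro v w
    apply Set.indicator_nonneg
    intro p _
    positivity
  have hInorm : ∀ v, (∫ w, ‖f v w‖) = ∫ w, f v w := by
    intro v
    congr 1; funext w
    exact Real.norm_of_nonneg (hfnn v w)
  have hInt2 : Integrable (fun v => ∫ w, ‖f v w‖) := by
    have heq : (fun v => ∫ w, ‖f v w‖) = fun v =>
        Real.exp (-(v - c)^2/2) * ∫ w in Ioc (max v V_R) V_F, Real.exp ((w - c)^2/2) := by
      funext v; rw [hInorm, hH]
    rw [heq]
    apply Integrable.mono' ((gauss_int c).const_mul (Real.exp K * (V_F - V_R)))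
    · apply Measurable.aestronglyMeasurable
      apply Measurable.mul
      · fun_prop
      · exact hHanti.measurable
    · filter_upwards with v
      rw [Real.norm_eq_abs, abs_of_nonneg (mul_nonneg (Real.exp_pos _).le (hHnn v))]
      rw [mul_comm (Real.exp K * (V_F - V_R))]
      exact mul_le_mul_of_nonneg_left (hbound v) (Real.exp_pos _).le
  have huncur : Function.uncurry f = Set.indicator S g1 := by
    funext p; simp [hfdef, Function.uncurry]
  have hIntf : Integrable (Function.uncurry f) (volume.prod volume) := by
    rw [integrable_prod_iff]
    · exact ⟨ae_of_all _ hint1, hInt2⟩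
    · rw [huncur]
      exact (hg1c.measurable.indicator hS).aestronglyMeasurable
  have hswap := integral_integral_swap hIntf
  have hlhs : (∫ v in Iic V_F, Real.exp (-(v - c)^2/2) *
      ∫ w in (max v V_R)..V_F, Real.exp ((w - c)^2/2)) = ∫ v, ∫ w, f v w := by
    have h1 : (∫ v in Iic V_F, Real.exp (-(v - c)^2/2) *
        ∫ w in (max v V_R)..V_F, Real.exp ((w - c)^2/2)) = ∫ v in Iic V_F, ∫ w, f v w := by
      apply setIntegral_congr_fun measurableSet_Iic
      intro v hv
      simp only
      rw [hH, intervalIntegral.integral_of_le (max_le (by exact hv) hV)]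
    have h2 : (∫ v in Iic V_F, ∫ w, f v w) = ∫ v, ∫ w, f v w := by
      apply setIntegral_eq_integral_of_forall_compl_eq_zero
      intro v hv
      simp only [mem_Iic, not_le] at hv
      rw [hH, Ioc_eq_empty (by simp only [not_lt]; exact le_trans hv.le (le_max_left v V_R))]
      simp
    rw [h1, h2]
  have hrhs : (∫ w, ∫ v, f v w) = ∫ w in Ioc V_R V_F,
      Real.exp ((w - c)^2/2) * ∫ v in Iio w, Real.exp (-(v - c)^2/2) := by
    have hstep : ∀ w, (∫ v, f v w) = Set.indicator (Ioc V_R V_F)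
        (fun w' => Real.exp ((w' - c)^2/2) * ∫ v in Iio w', Real.exp (-(v - c)^2/2)) w := by
      intro w
      by_cases hw : w ∈ Ioc V_R V_F
      · rw [Set.indicator_of_mem hw]
        have : (fun v => f v w) = Set.indicator (Iio w)
            (fun v => Real.exp ((w - c)^2/2) * Real.exp (-(v - c)^2/2)) := by
          funext v
          simp only [hfdef, Set.indicator, hSdef, mem_setOf_eq, mem_Iio, max_lt_iff, hg1]
          rcases hw with ⟨hw1, hw2⟩
          by_cases hvw : v < w
          · simp [hvw, hw1, hw2, mul_comm]
          · simp [hvw]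
        rw [this, integral_indicator measurableSet_Iio, ← integral_const_mul]
      · have : (fun v => f v w) = fun _ => (0:ℝ) := by
          funext v
          apply Set.indicator_of_notMem
          simp only [hSdef, mem_setOf_eq, mem_Ioc, max_lt_iff, not_and_or] at hw ⊢
          tauto
        rw [this, Set.indicator_of_notMem hw]
        simp
    simp_rw [hstep]
    rw [integral_indicator measurableSet_Ioc]
  rw [hlhs, hswap, hrhs]

lemma int_mul_exp_quad (a : ℝ) : Integrable (fun s : ℝ => s * Real.exp (-s^2/2 + s*a)) := by
  have h1 := integrable_mul_exp_neg_mul_sq (by norm_num : (0:ℝ) < 1/2)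
  have h2 := integrable_exp_neg_mul_sq (by norm_num : (0:ℝ) < 1/2)
  have h3 : Integrable (fun x : ℝ => (x + a) * Real.exp (-(1/2) * x^2)) := by
    have := h1.add (h2.const_mul a)
    refine this.congr ?_
    filter_upwards with x
    simp only [Pi.add_apply]
    ring
  have h4 := (h3.comp_sub_right a).const_mul (Real.exp (a^2/2))
  refine h4.congr ?_
  filter_upwards with s
  simp only [sub_add_cancel]
  rw [mul_comm (Real.exp (a^2/2)), mul_assoc, ← Real.exp_add]
  ring_nf

lemma subst_Iio (c w : ℝ) :
    (∫ v in Iio w, Real.exp (-(v - c)^2/2)) = ∫ s in Ioi (0:ℝ), Real.exp (-(w - s - c)^2/2) := by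
  have hmp : MeasurePreserving (fun x : ℝ => w - x) volume volume :=
    Measure.measurePreserving_sub_left volume w
  have hemb : MeasurableEmbedding (fun x : ℝ => w - x) :=
    (Homeomorph.subLeft w).measurableEmbedding
  have := hmp.setIntegral_preimage_emb hemb (fun v => Real.exp (-(v - c)^2/2)) (Iio w)
  rw [← this]
  have hpre : (fun x : ℝ => w - x) ⁻¹' (Iio w) = Ioi 0 := by
    ext x; simp
  rw [hpre]

lemma inner_identity (c w : ℝ) :
    Real.exp ((w - c)^2/2) * ∫ v in Iio w, Real.exp (-(v - c)^2/2)
      = ∫ s in Ioi (0:ℝ), Real.exp (-s^2/2 + s*(w - c)) := by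
  rw [subst_Iio, ← integral_const_mul]
  refine setIntegral_congr_fun measurableSet_Ioi (fun s _ => ?_)
  rw [← Real.exp_add]
  congr 1
  ring

lemma Ifun_eq {V_R V_F : ℝ} (hV : V_R ≤ V_F) (b N : ℝ) :
    Ifun V_R V_F b N = ∫ s in Ioi (0:ℝ),
      Real.exp (-s^2/2) * Real.exp (-(s*b*N)) * (Real.exp (s*V_F) - Real.exp (s*V_R)) / s := by
  unfold Ifun
  rw [step1 hV (b*N)]
  rw [show (∫ w in Ioc V_R V_F, Real.exp ((w - b*N)^2/2) *
        ∫ v in Iio w, Real.exp (-(v - b*N)^2/2))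
      = ∫ w in Ioc V_R V_F, ∫ s in Ioi (0:ℝ), Real.exp (-s^2/2 + s*(w - b*N)) from
    setIntegral_congr_fun measurableSet_Ioc (fun w _ => inner_identity (b*N) w)]
  rw [step2 hV (b*N)]
  refine setIntegral_congr_fun measurableSet_Ioi (fun s _ => ?_)
  rw [mul_assoc s b N]

noncomputable def Ff (V_R V_F N b s : ℝ) : ℝ :=
  Real.exp (-s^2/2) * Real.exp (-(s*b*N)) * (Real.exp (s*V_F) - Real.exp (s*V_R)) / s

noncomputable def Ff' (V_R V_F N b s : ℝ) : ℝ :=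
  Real.exp (-s^2/2) * (Real.exp (-(s*b*N)) * (-(s*N))) *
    (Real.exp (s*V_F) - Real.exp (s*V_R)) / s

noncomputable def Qf (V_R V_F N b s : ℝ) : ℝ :=
  Real.exp (-s^2/2) * Real.exp (-(s*b*N)) * (Real.exp (s*V_F) - Real.exp (s*V_R))

lemma exp_diff_le {V_R V_F s : ℝ} (hV : V_R ≤ V_F) (hs : 0 ≤ s) :
    Real.exp (s*V_F) - Real.exp (s*V_R) ≤ s*(V_F - V_R) * Real.exp (s*V_F) := by
  have h1 := Real.add_one_le_exp (s*V_R - s*V_F)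
  have h2 : Real.exp (s*V_R) = Real.exp (s*V_F) * Real.exp (s*V_R - s*V_F) := by
    rw [← Real.exp_add]; congr 1; ring
  nlinarith [Real.exp_pos (s*V_F), Real.exp_pos (s*V_R)]

lemma exp_diff_nonneg {V_R V_F s : ℝ} (hV : V_R ≤ V_F) (hs : 0 ≤ s) :
    0 ≤ Real.exp (s*V_F) - Real.exp (s*V_R) :=
  sub_nonneg.2 (Real.exp_le_exp.2 (mul_le_mul_of_nonneg_left hV hs))

lemma Ff_nonneg {V_R V_F N b s : ℝ} (hV : V_R ≤ V_F) (hs : 0 < s) :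
    0 ≤ Ff V_R V_F N b s := by
  unfold Ff
  exact div_nonneg (mul_nonneg (by positivity) (exp_diff_nonneg hV hs.le)) hs.le

lemma Ff_le {V_R V_F N b s : ℝ} (hV : V_R ≤ V_F) (hs : 0 < s) :
    Ff V_R V_F N b s ≤ (V_F - V_R) * Real.exp (-s^2/2 + s*(V_F - b*N)) := by
  unfold Ff
  rw [div_le_iff₀ hs]
  have e3 : Real.exp (-s^2/2) * Real.exp (-(s*b*N)) * Real.exp (s*V_F)
      = Real.exp (-s^2/2 + s*(V_F - b*N)) := by
    rw [← Real.exp_add, ← Real.exp_add]; congr 1; ring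
  calc Real.exp (-s^2/2) * Real.exp (-(s*b*N)) * (Real.exp (s*V_F) - Real.exp (s*V_R))
      ≤ Real.exp (-s^2/2) * Real.exp (-(s*b*N)) * (s*(V_F - V_R) * Real.exp (s*V_F)) := by
        exact mul_le_mul_of_nonneg_left (exp_diff_le hV hs.le) (by positivity)
    _ = (V_F - V_R) * Real.exp (-s^2/2 + s*(V_F - b*N)) * s := by rw [← e3]; ring

lemma Ff_contOn (V_R V_F N b : ℝ) :
    ContinuousOn (Ff V_R V_F N b) (Ioi (0:ℝ)) := by
  apply ContinuousOn.div (Continuous.continuousOn (by fun_prop)) continuousOn_id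
  exact fun s hs => ne_of_gt hs

lemma Ff'_contOn (V_R V_F N b : ℝ) :
    ContinuousOn (Ff' V_R V_F N b) (Ioi (0:ℝ)) := by
  apply ContinuousOn.div (Continuous.continuousOn (by fun_prop)) continuousOn_id
  exact fun s hs => ne_of_gt hs

lemma Ff_integrableOn {V_R V_F : ℝ} (hV : V_R ≤ V_F) (N b : ℝ) :
    IntegrableOn (Ff V_R V_F N b) (Ioi (0:ℝ)) := by
  apply Integrable.mono'
    (((int_exp_quad (V_F - b*N)).const_mul (V_F - V_R)).integrableOn)
  · exact (Ff_contOn V_R V_F N b).aestronglyMeasurable measurableSet_Ioi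
  · filter_upwards [ae_restrict_mem measurableSet_Ioi] with s hs
    rw [Real.norm_of_nonneg (Ff_nonneg hV hs)]
    exact Ff_le hV hs

lemma Ff_hasDeriv (V_R V_F N s : ℝ) (b : ℝ) :
    HasDerivAt (fun b => Ff V_R V_F N b s) (Ff' V_R V_F N b s) b := by
  have l : HasDerivAt (fun b : ℝ => -(s*b*N)) (-(s*N)) b := by
    have h0 : (fun b : ℝ => -(s*b*N)) = fun b : ℝ => -(s*N)*b := by funext b; ring
    rw [h0]
    simpa using (hasDerivAt_id b).const_mul (-(s*N))
  have h1 := l.exp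
  have h2 := ((h1.const_mul (Real.exp (-s^2/2))).mul_const
    (Real.exp (s*V_F) - Real.exp (s*V_R))).div_const s
  exact h2

lemma Qf_integrableOn {V_R V_F : ℝ} (hV : V_R ≤ V_F) (N b : ℝ) :
    IntegrableOn (Qf V_R V_F N b) (Ioi (0:ℝ)) := by
  apply Integrable.mono'
    (((int_mul_exp_quad (V_F - b*N)).const_mul (V_F - V_R)).integrableOn)
  · apply Continuous.aestronglyMeasurable
    unfold Qf
    fun_prop
  · filter_upwards [ae_restrict_mem measurableSet_Ioi] with s hs
    have hs0 : (0:ℝ) < s := hs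
    have hnn : 0 ≤ Qf V_R V_F N b s := by
      unfold Qf
      exact mul_nonneg (by positivity) (exp_diff_nonneg hV hs0.le)
    rw [Real.norm_of_nonneg hnn]
    unfold Qf
    have e3 : Real.exp (-s^2/2) * Real.exp (-(s*b*N)) * Real.exp (s*V_F)
        = Real.exp (-s^2/2 + s*(V_F - b*N)) := by
      rw [← Real.exp_add, ← Real.exp_add]; congr 1; ring
    calc Real.exp (-s^2/2) * Real.exp (-(s*b*N)) * (Real.exp (s*V_F) - Real.exp (s*V_R))
        ≤ Real.exp (-s^2/2) * Real.exp (-(s*b*N)) * (s*(V_F - V_R) * Real.exp (s*V_F)) :=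
          mul_le_mul_of_nonneg_left (exp_diff_le hV hs0.le) (by positivity)
      _ = (V_F - V_R) * (s * Real.exp (-s^2/2 + s*(V_F - b*N))) := by rw [← e3]; ring

lemma Qf_pos {V_R V_F N b s : ℝ} (hV : V_R < V_F) (hs : 0 < s) :
    0 < Qf V_R V_F N b s := by
  unfold Qf
  exact mul_pos (by positivity) (sub_pos.2 (Real.exp_lt_exp.2 (by nlinarith)))

lemma Ff_pos {V_R V_F N b s : ℝ} (hV : V_R < V_F) (hs : 0 < s) :
    0 < Ff V_R V_F N b s := by
  unfold Ff
  apply div_pos _ hs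
  exact mul_pos (by positivity) (sub_pos.2 (Real.exp_lt_exp.2 (by nlinarith)))

lemma Qf_int_pos {V_R V_F : ℝ} (hV : V_R < V_F) (N b : ℝ) :
    0 < ∫ s in Ioi (0:ℝ), Qf V_R V_F N b s := by
  rw [setIntegral_pos_iff_support_of_nonneg_ae]
  · have hsub : Ioi (0:ℝ) ⊆ Function.support (Qf V_R V_F N b) :=
      fun s hs => ne_of_gt (Qf_pos hV hs)
    rw [Set.inter_eq_self_of_subset_right hsub, Real.volume_Ioi]
    simp
  · filter_upwards [ae_restrict_mem measurableSet_Ioi] with s hs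
    exact (Qf_pos hV hs).le
  · exact Qf_integrableOn hV.le N b

lemma Ifun_pos {V_R V_F : ℝ} (hV : V_R < V_F) (b N : ℝ) :
    0 < Ifun V_R V_F b N := by
  rw [Ifun_eq hV.le b N]
  rw [setIntegral_pos_iff_support_of_nonneg_ae]
  · have hsub : Ioi (0:ℝ) ⊆ Function.support (Ff V_R V_F N b) :=
      fun s hs => ne_of_gt (Ff_pos hV hs)
    have : Function.support (fun s => Real.exp (-s^2/2) * Real.exp (-(s*b*N)) *
        (Real.exp (s*V_F) - Real.exp (s*V_R)) / s) = Function.support (Ff V_R V_F N b) := rfl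
    rw [this, Set.inter_eq_self_of_subset_right hsub, Real.volume_Ioi]
    simp
  · filter_upwards [ae_restrict_mem measurableSet_Ioi] with s hs
    exact (Ff_pos (s := s) hV hs).le
  · exact Ff_integrableOn hV.le N b

lemma Ifun_hasDeriv {V_R V_F : ℝ} (hV : V_R < V_F) {N : ℝ} (hN : 0 < N) (b₀ : ℝ) :
    HasDerivAt (fun b => Ifun V_R V_F b N)
      (-N * ∫ s in Ioi (0:ℝ), Qf V_R V_F N b₀ s) b₀ := by
  have hVle := hV.le
  set bnd : ℝ → ℝ :=
    fun s => (N*(V_F - V_R)) * (s * Real.exp (-s^2/2 + s*(V_F + (|b₀|+1)*N))) with hbnd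
  have h_bound : ∀ᵐ s ∂(volume.restrict (Ioi (0:ℝ))),
      ∀ b ∈ Metric.ball b₀ 1, ‖Ff' V_R V_F N b s‖ ≤ bnd s := by
    filter_upwards [ae_restrict_mem measurableSet_Ioi] with s hs
    intro b hb
    have hs0 : (0:ℝ) < s := hs
    have heq : Ff' V_R V_F N b s = -(s*N) * Ff V_R V_F N b s := by
      unfold Ff Ff'; ring
    rw [heq, norm_mul, Real.norm_eq_abs, abs_neg, abs_of_nonneg (by positivity : 0 ≤ s*N),
      Real.norm_of_nonneg (Ff_nonneg hVle hs0)]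
    have hb' : |b| ≤ |b₀| + 1 := by
      have h1 : |b - b₀| < 1 := by
        rw [← Real.dist_eq]
        exact hb
      calc |b| = |b₀ + (b - b₀)| := by ring_nf
        _ ≤ |b₀| + |b - b₀| := abs_add_le _ _
        _ ≤ |b₀| + 1 := by linarith
    have hVb : V_F - b*N ≤ V_F + (|b₀|+1)*N := by
      have h2 : -b ≤ |b| := neg_le_abs b
      nlinarith
    have hE : Real.exp (-s^2/2 + s*(V_F - b*N))
        ≤ Real.exp (-s^2/2 + s*(V_F + (|b₀|+1)*N)) := by
      apply Real.exp_le_exp.2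
      have := mul_le_mul_of_nonneg_left hVb hs0.le
      linarith
    calc s*N * Ff V_R V_F N b s
        ≤ s*N * ((V_F - V_R) * Real.exp (-s^2/2 + s*(V_F - b*N))) :=
          mul_le_mul_of_nonneg_left (Ff_le hVle hs0) (by positivity)
      _ = (N*(V_F - V_R)) * (s * Real.exp (-s^2/2 + s*(V_F - b*N))) := by ring
      _ ≤ bnd s := by
          rw [hbnd]
          apply mul_le_mul_of_nonneg_left _ (mul_nonneg hN.le (by linarith))
          exact mul_le_mul_of_nonneg_left hE hs0.le
  have H := hasDerivAt_integral_of_dominated_loc_of_deriv_le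
    (μ := volume.restrict (Ioi (0:ℝ))) (x₀ := b₀)
    (F := fun b s => Ff V_R V_F N b s) (F' := fun b s => Ff' V_R V_F N b s)
    (bound := bnd) (Metric.ball_mem_nhds b₀ one_pos)
    (Eventually.of_forall fun b =>
      (Ff_contOn V_R V_F N b).aestronglyMeasurable measurableSet_Ioi)
    (Ff_integrableOn hVle N b₀)
    ((Ff'_contOn V_R V_F N b₀).aestronglyMeasurable measurableSet_Ioi)
    h_bound
    (((int_mul_exp_quad (V_F + (|b₀|+1)*N)).const_mul (N*(V_F-V_R))).integrableOn)
    (Eventually.of_forall fun s => fun b _ => Ff_hasDeriv V_R V_F N s b)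
  have hD : (∫ s in Ioi (0:ℝ), Ff' V_R V_F N b₀ s)
      = -N * ∫ s in Ioi (0:ℝ), Qf V_R V_F N b₀ s := by
    rw [← integral_const_mul]
    apply setIntegral_congr_fun measurableSet_Ioi
    intro s hs
    have hs0 : s ≠ 0 := ne_of_gt hs
    unfold Ff' Qf
    field_simp
  have h2 := H.2
  rw [hD] at h2
  have hrepf : (fun b => ∫ s in Ioi (0:ℝ), Ff V_R V_F N b s)
      = fun b => Ifun V_R V_F b N := by
    funext b
    rw [Ifun_eq hVle b N]
    simp only [Ff]
  rw [hrepf] at h2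
  exact h2

/-- For every `N > 0`, `∂_b I(b,N) = −N ∫_0^∞ e^{−s²/2} e^{−sbN} (e^{sV_F} − e^{sV_R}) ds < 0`;
in particular `b ↦ I(b,N)` is strictly decreasing and `b ↦ 1/I(b,N)` is strictly
increasing. -/
theorem Ifun_deriv_b_neg (V_R V_F : ℝ) (hV : V_R < V_F) (N : ℝ) (hN : 0 < N) :
    (∀ b : ℝ,
      HasDerivAt (fun b => Ifun V_R V_F b N)
        (-N * ∫ s in Set.Ioi (0 : ℝ),
          Real.exp (-s ^ 2 / 2) * Real.exp (-(s * b * N)) *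
            (Real.exp (s * V_F) - Real.exp (s * V_R))) b ∧
      -N * (∫ s in Set.Ioi (0 : ℝ),
          Real.exp (-s ^ 2 / 2) * Real.exp (-(s * b * N)) *
            (Real.exp (s * V_F) - Real.exp (s * V_R))) < 0) ∧
    StrictAnti (fun b => Ifun V_R V_F b N) ∧
    StrictMono (fun b => 1 / Ifun V_R V_F b N) := by
  have hQeq : ∀ b : ℝ, (∫ s in Set.Ioi (0 : ℝ),
      Real.exp (-s ^ 2 / 2) * Real.exp (-(s * b * N)) *
        (Real.exp (s * V_F) - Real.exp (s * V_R))) = ∫ s in Ioi (0:ℝ), Qf V_R V_F N b s := by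
    intro b
    simp only [Qf]
  have hderiv : ∀ b : ℝ, HasDerivAt (fun b => Ifun V_R V_F b N)
      (-N * ∫ s in Set.Ioi (0 : ℝ),
        Real.exp (-s ^ 2 / 2) * Real.exp (-(s * b * N)) *
          (Real.exp (s * V_F) - Real.exp (s * V_R))) b := by
    intro b
    rw [hQeq b]
    exact Ifun_hasDeriv hV hN b
  have hneg : ∀ b : ℝ, -N * (∫ s in Set.Ioi (0 : ℝ),
      Real.exp (-s ^ 2 / 2) * Real.exp (-(s * b * N)) *
        (Real.exp (s * V_F) - Real.exp (s * V_R))) < 0 := by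
    intro b
    rw [hQeq b]
    exact mul_neg_of_neg_of_pos (by linarith) (Qf_int_pos hV N b)
  have hanti : StrictAnti (fun b => Ifun V_R V_F b N) := by
    apply strictAnti_of_deriv_neg
    intro b
    rw [(hderiv b).deriv]
    exact hneg b
  refine ⟨fun b => ⟨hderiv b, hneg b⟩, hanti, ?_⟩
  intro a b hab
  simp only
  apply one_div_lt_one_div_of_lt (Ifun_pos hV b N)
  exact hanti hab
end

section
/- For b ≤ 0 let N_b* denote the unique solution of N·I(b,N) = 1. Then b ↦ N_b* is strictly increasing on (−∞,0]: if b₁ < b₂ ≤ 0 then N_{b₁}* < N_{b₂}*. -/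
open MeasureTheory Real Filter

namespace NstarAux

/-- translation for `Iic` set integrals -/
lemma shift_Iic (w μ : ℝ) :
    ∫ t in Set.Iic w, Real.exp (-(t - μ) ^ 2 / 2)
      = ∫ t in Set.Iic (w - μ), Real.exp (-t ^ 2 / 2) := by
  have hmp : MeasurePreserving (fun t : ℝ => t + μ) volume volume :=
    measurePreserving_add_right volume μ
  have hemb : MeasurableEmbedding (fun t : ℝ => t + μ) :=
    (MeasurableEquiv.addRight μ).measurableEmbedding
  have hpre : (fun t : ℝ => t + μ) ⁻¹' Set.Iic w = Set.Iic (w - μ) := by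
    ext x; simp only [Set.mem_preimage, Set.mem_Iic]; constructor <;> intro h <;> linarith
  have := hmp.setIntegral_preimage_emb hemb
    (fun t => Real.exp (-(t - μ) ^ 2 / 2)) (Set.Iic w)
  rw [hpre] at this
  rw [← this]
  apply setIntegral_congr_fun measurableSet_Iic
  intro x _
  ring_nf

noncomputable def hfun (s : ℝ) : ℝ :=
  Real.exp (s ^ 2 / 2) * ∫ t in Set.Iic s, Real.exp (-t ^ 2 / 2)

lemma hfun_eq (s : ℝ) :
    hfun s = ∫ u in Set.Ici (0 : ℝ), Real.exp (s * u - u ^ 2 / 2) := by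
  unfold hfun
  rw [← integral_const_mul]
  have hmp : MeasurePreserving (fun u : ℝ => s - u) volume volume :=
    Measure.measurePreserving_sub_left volume s
  have hemb : MeasurableEmbedding (fun u : ℝ => s - u) := by
    have h1 : MeasurableEmbedding (fun u : ℝ => -u) :=
      (MeasurableEquiv.neg ℝ).measurableEmbedding
    have h2 : MeasurableEmbedding (fun u : ℝ => s + u) :=
      (MeasurableEquiv.addLeft s).measurableEmbedding
    have : (fun u : ℝ => s - u) = (fun u : ℝ => s + u) ∘ (fun u : ℝ => -u) := by
      funext u; simp [sub_eq_add_neg]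
    rw [this]; exact h2.comp h1
  have hpre : (fun u : ℝ => s - u) ⁻¹' Set.Iic s = Set.Ici (0 : ℝ) := by
    ext x; simp only [Set.mem_preimage, Set.mem_Iic, Set.mem_Ici]
    constructor <;> intro h <;> linarith
  have := hmp.setIntegral_preimage_emb hemb
    (fun t => Real.exp (s ^ 2 / 2) * Real.exp (-t ^ 2 / 2)) (Set.Iic s)
  rw [hpre] at this
  rw [← this]
  apply setIntegral_congr_fun measurableSet_Ici
  intro u _
  show Real.exp (s ^ 2 / 2) * Real.exp (-(s - u) ^ 2 / 2) = Real.exp (s * u - u ^ 2 / 2)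
  rw [← Real.exp_add]
  congr 1
  ring

lemma integrable_kernel (s : ℝ) :
    Integrable (fun u : ℝ => Real.exp (s * u - u ^ 2 / 2)) volume := by
  have h1 : Integrable (fun x : ℝ => Real.exp (-(1 / 2 : ℝ) * x ^ 2)) volume :=
    integrable_exp_neg_mul_sq (by norm_num)
  have h2 := (h1.comp_sub_right s).const_mul (Real.exp (s ^ 2 / 2))
  have heq : (fun u : ℝ => Real.exp (s * u - u ^ 2 / 2))
      = fun u : ℝ => Real.exp (s ^ 2 / 2) * Real.exp (-(1 / 2 : ℝ) * (u - s) ^ 2) := by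
    funext u; rw [← Real.exp_add]; congr 1; ring
  rw [heq]; exact h2

lemma hfun_strictMono : StrictMono hfun := by
  intro s₁ s₂ hs
  rw [hfun_eq, hfun_eq]
  have h1 : IntegrableOn (fun u : ℝ => Real.exp (s₁ * u - u ^ 2 / 2)) (Set.Ici 0) volume :=
    (integrable_kernel s₁).integrableOn
  have h2 : IntegrableOn (fun u : ℝ => Real.exp (s₂ * u - u ^ 2 / 2)) (Set.Ici 0) volume :=
    (integrable_kernel s₂).integrableOn
  rw [← sub_pos, ← integral_sub h2 h1]
  have hd : IntegrableOn
      (fun u : ℝ => Real.exp (s₂ * u - u ^ 2 / 2) - Real.exp (s₁ * u - u ^ 2 / 2))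
      (Set.Ici 0) volume := h2.sub h1
  have hnonneg : ∀ u ∈ Set.Ici (0:ℝ),
      0 ≤ Real.exp (s₂ * u - u ^ 2 / 2) - Real.exp (s₁ * u - u ^ 2 / 2) := by
    intro u hu
    have : s₁ * u ≤ s₂ * u := mul_le_mul_of_nonneg_right hs.le hu
    have := Real.exp_le_exp.2 (by linarith : s₁ * u - u ^ 2 / 2 ≤ s₂ * u - u ^ 2 / 2)
    linarith
  have hstep : (0:ℝ) < ∫ u in (0:ℝ)..1,
      (Real.exp (s₂ * u - u ^ 2 / 2) - Real.exp (s₁ * u - u ^ 2 / 2)) := by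
    apply intervalIntegral.intervalIntegral_pos_of_pos_on
    · exact (Continuous.intervalIntegrable (by continuity) 0 1)
    · intro u hu
      have hu0 : 0 < u := hu.1
      have : s₁ * u < s₂ * u := mul_lt_mul_of_pos_right hs hu0
      have := Real.exp_lt_exp.2 (by linarith : s₁ * u - u ^ 2 / 2 < s₂ * u - u ^ 2 / 2)
      linarith
    · norm_num
  rw [intervalIntegral.integral_of_le (by norm_num : (0:ℝ) ≤ 1)] at hstep
  refine lt_of_lt_of_le hstep ?_
  apply setIntegral_mono_set hd
  · exact (ae_restrict_iff' measurableSet_Ici).2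
      (Filter.Eventually.of_forall fun u hu => hnonneg u hu)
  · exact HasSubset.Subset.eventuallyLE fun u hu => hu.1.le

lemma hfun_nonneg (s : ℝ) : 0 ≤ hfun s := by
  unfold hfun
  apply mul_nonneg (Real.exp_nonneg _)
  exact setIntegral_nonneg measurableSet_Iic fun t _ => (Real.exp_nonneg _)

lemma Ifun_repr (V_R V_F : ℝ) (hV : V_R ≤ V_F) (b N : ℝ) :
    Ifun V_R V_F b N = ∫ w in Set.Ioc V_R V_F, hfun (w - b * N) := by
  set μ : ℝ := b * N with hμ_def
  set f : ℝ → ℝ := fun v => Real.exp (-(v - μ) ^ 2 / 2) with hf_def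
  set g : ℝ → ℝ := fun w => Real.exp ((w - μ) ^ 2 / 2) with hg_def
  set S : Set (ℝ × ℝ) := {q : ℝ × ℝ | q.1 < q.2} with hS_def
  set F : ℝ × ℝ → ℝ := S.indicator (fun q => f q.1 * g q.2) with hF_def
  have hSmeas : MeasurableSet S := measurableSet_lt measurable_fst measurable_snd
  have hfint : Integrable f volume := by
    have h1 : Integrable (fun x : ℝ => Real.exp (-(1/2:ℝ) * x ^ 2)) volume :=
      integrable_exp_neg_mul_sq (by norm_num)
    have h2 := h1.comp_sub_right μ
    have heq : f = fun x : ℝ => Real.exp (-(1/2:ℝ) * (x - μ) ^ 2) := by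
      funext x; simp only [hf_def]; congr 1; ring
    rw [heq]; exact h2
  have hgcont : Continuous g := by
    apply Real.continuous_exp.comp; fun_prop
  have stepA : ∀ v ∈ Set.Iic V_F,
      f v * (∫ w in (max v V_R)..V_F, g w) = ∫ w in Set.Ioc V_R V_F, F (v, w) := by
    intro v hv
    have hle : max v V_R ≤ V_F := max_le hv hV
    rw [intervalIntegral.integral_of_le hle]
    have hset : Set.Ioc (max v V_R) V_F = Set.Ioc V_R V_F ∩ Set.Ioi v := by
      ext w
      simp only [Set.mem_Ioc, Set.mem_inter_iff, Set.mem_Ioi, max_lt_iff]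
      tauto
    rw [hset, ← setIntegral_indicator measurableSet_Ioi, ← integral_const_mul]
    apply setIntegral_congr_fun measurableSet_Ioc
    intro w _
    show f v * (Set.Ioi v).indicator g w = F (v, w)
    rw [hF_def]
    by_cases h : v < w
    · rw [Set.indicator_of_mem (Set.mem_Ioi.mpr h) g,
        Set.indicator_of_mem (show (v, w) ∈ S from h)]
    · rw [Set.indicator_of_notMem (show w ∉ Set.Ioi v by simpa using h) g,
        Set.indicator_of_notMem (show (v, w) ∉ S from h), mul_zero]
  have hFint : Integrable F
      ((volume.restrict (Set.Iic V_F)).prod (volume.restrict (Set.Ioc V_R V_F))) := by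
    apply Integrable.indicator _ hSmeas
    exact (hfint.restrict).mul_prod (hgcont.integrableOn_Ioc)
  have stepB : ∀ w ∈ Set.Ioc V_R V_F,
      (∫ v in Set.Iic V_F, F (v, w)) = hfun (w - μ) := by
    intro w hw
    have h1 : ∀ v, F (v, w) = g w * (Set.Iio w).indicator f v := by
      intro v
      rw [hF_def]
      by_cases h : v < w
      · rw [Set.indicator_of_mem (show (v, w) ∈ S from h),
          Set.indicator_of_mem (Set.mem_Iio.mpr h) f, mul_comm]
      · rw [Set.indicator_of_notMem (show (v, w) ∉ S from h),
          Set.indicator_of_notMem (show v ∉ Set.Iio w by simpa using h) f, mul_zero]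
    simp_rw [h1]
    rw [integral_const_mul, setIntegral_indicator measurableSet_Iio]
    have hsub : Set.Iic V_F ∩ Set.Iio w = Set.Iio w :=
      Set.inter_eq_self_of_subset_right fun x hx => le_trans (le_of_lt hx) hw.2
    rw [hsub, setIntegral_congr_set Iio_ae_eq_Iic]
    unfold hfun
    rw [← shift_Iic w μ]
  calc Ifun V_R V_F b N
      = ∫ v in Set.Iic V_F, ∫ w in Set.Ioc V_R V_F, F (v, w) := by
        apply setIntegral_congr_fun measurableSet_Iic
        intro v hv
        exact stepA v hv
    _ = ∫ w in Set.Ioc V_R V_F, ∫ v in Set.Iic V_F, F (v, w) :=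
        integral_integral_swap hFint
    _ = ∫ w in Set.Ioc V_R V_F, hfun (w - μ) := by
        apply setIntegral_congr_fun measurableSet_Ioc
        intro w hw
        exact stepB w hw

lemma J_lt (V_R V_F : ℝ) (hV : V_R < V_F) {μ₁ μ₂ : ℝ} (h : μ₁ < μ₂) :
    (∫ w in Set.Ioc V_R V_F, hfun (w - μ₂)) < ∫ w in Set.Ioc V_R V_F, hfun (w - μ₁) := by
  rw [← intervalIntegral.integral_of_le hV.le, ← intervalIntegral.integral_of_le hV.le]
  have m1 : Monotone fun w : ℝ => hfun (w - μ₁) :=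
    fun a b hab => hfun_strictMono.monotone (sub_le_sub_right hab μ₁)
  have m2 : Monotone fun w : ℝ => hfun (w - μ₂) :=
    fun a b hab => hfun_strictMono.monotone (sub_le_sub_right hab μ₂)
  have i1 : IntervalIntegrable (fun w : ℝ => hfun (w - μ₁)) volume V_R V_F :=
    m1.intervalIntegrable
  have i2 : IntervalIntegrable (fun w : ℝ => hfun (w - μ₂)) volume V_R V_F :=
    m2.intervalIntegrable
  have hpos := intervalIntegral.intervalIntegral_pos_of_pos_on (i1.sub i2)
    (fun w _ => sub_pos.2 (hfun_strictMono (by linarith : w - μ₂ < w - μ₁))) hV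
  rw [intervalIntegral.integral_sub i1 i2] at hpos
  linarith

lemma J_nonneg (V_R V_F μ : ℝ) : 0 ≤ ∫ w in Set.Ioc V_R V_F, hfun (w - μ) :=
  setIntegral_nonneg measurableSet_Ioc fun w _ => hfun_nonneg _

end NstarAux

/-- For `b ≤ 0` let `N_b*` be the unique solution of `N·I(b,N) = 1`. Then `b ↦ N_b*` is
strictly increasing on `(−∞, 0]`. -/
theorem Nstar_strictMonoOn (V_R V_F : ℝ) (hV : V_R < V_F)
    (Nstar : ℝ → ℝ)
    (hNstar : ∀ b : ℝ, b ≤ 0 →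
      0 < Nstar b ∧ Nstar b * Ifun V_R V_F b (Nstar b) = 1 ∧
      ∀ N : ℝ, 0 < N → N * Ifun V_R V_F b N = 1 → N = Nstar b) :
    StrictMonoOn Nstar (Set.Iic 0) := by
  intro b₁ hb₁ b₂ hb₂ h12
  obtain ⟨hN₁pos, hN₁eq, -⟩ := hNstar b₁ hb₁
  obtain ⟨hN₂pos, hN₂eq, -⟩ := hNstar b₂ hb₂
  by_contra hcon
  push_neg at hcon
  have hb₁0 : b₁ < 0 := lt_of_lt_of_le h12 hb₂
  rw [NstarAux.Ifun_repr V_R V_F hV.le] at hN₁eq hN₂eq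
  have hμlt : b₁ * Nstar b₂ < b₂ * Nstar b₂ := mul_lt_mul_of_pos_right h12 hN₂pos
  have hμle : b₁ * Nstar b₁ ≤ b₁ * Nstar b₂ := mul_le_mul_of_nonpos_left hcon hb₁0.le
  have hJle : (∫ w in Set.Ioc V_R V_F, NstarAux.hfun (w - b₁ * Nstar b₂))
      ≤ ∫ w in Set.Ioc V_R V_F, NstarAux.hfun (w - b₁ * Nstar b₁) := by
    rcases eq_or_lt_of_le hμle with he | hl
    · rw [he]
    · exact (NstarAux.J_lt V_R V_F hV hl).le
  have hJlt := NstarAux.J_lt V_R V_F hV hμlt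
  have hJ2nn := NstarAux.J_nonneg V_R V_F (b₁ * Nstar b₂)
  have key : Nstar b₂ * (∫ w in Set.Ioc V_R V_F, NstarAux.hfun (w - b₁ * Nstar b₂))
      ≤ Nstar b₁ * (∫ w in Set.Ioc V_R V_F, NstarAux.hfun (w - b₁ * Nstar b₁)) :=
    mul_le_mul hcon hJle hJ2nn hN₁pos.le
  have key2 : Nstar b₂ * (∫ w in Set.Ioc V_R V_F, NstarAux.hfun (w - b₂ * Nstar b₂))
      < Nstar b₂ * (∫ w in Set.Ioc V_R V_F, NstarAux.hfun (w - b₁ * Nstar b₂)) :=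
    mul_lt_mul_of_pos_left hJlt hN₂pos
  linarith
end

section
/- For b ≤ 0 let N_b* denote the unique solution of N·I(b,N) = 1. Then lim_{b → −∞} N_b* = 0. -/
open MeasureTheory Real Filter

set_option maxHeartbeats 1000000 in
lemma Ifun_lower (V_R V_F : ℝ) (hV : V_R < V_F) (b N : ℝ) (hc : b * N ≤ V_R) :
    2 * ((V_F - V_R) / 4) ^ 2 *
      Real.exp ((V_F - V_R) / 4 * (V_R - b * N)) ≤ Ifun V_R V_F b N := by
  set c := b * N with hcdef
  set δ := (V_F - V_R) / 4 with hδdef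
  have hδ : 0 < δ := by rw [hδdef]; linarith
  set m : ℝ := V_R + 2 * δ with hmdef
  set Vq : ℝ := V_R + δ with hVqdef
  have hVF : V_F = V_R + 4 * δ := by rw [hδdef]; ring
  set h : ℝ → ℝ := fun w => Real.exp ((w - c) ^ 2 / 2) with hhdef
  have hhcont : Continuous h := by fun_prop
  have hhint : ∀ a b : ℝ, IntervalIntegrable h volume a b := fun a b =>
    hhcont.intervalIntegrable a b
  set g : ℝ → ℝ := fun v => ∫ w in (max v V_R)..V_F, h w with hgdef
  set f : ℝ → ℝ := fun v => Real.exp (-(v - c) ^ 2 / 2) * g v with hfdef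
  have hIfun : Ifun V_R V_F b N = ∫ v in Set.Iic V_F, f v := rfl
  -- continuity of g
  have hgeq : ∀ v, g v = (∫ w in V_R..V_F, h w) - ∫ w in V_R..(max v V_R), h w := by
    intro v
    have := intervalIntegral.integral_add_adjacent_intervals (μ := volume)
      (hhint V_R (max v V_R)) (hhint (max v V_R) V_F)
    simp only [hgdef]
    linarith [this]
  have hgcont : Continuous g := by
    have hprim : Continuous fun a => ∫ w in V_R..a, h w :=
      intervalIntegral.continuous_primitive hhint V_R
    have : Continuous fun v => (∫ w in V_R..V_F, h w) - ∫ w in V_R..(max v V_R), h w :=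
      continuous_const.sub (hprim.comp (continuous_id.max continuous_const))
    exact (funext hgeq) ▸ this
  have hfcont : Continuous f := by fun_prop
  -- bounds on g
  set K : ℝ := max ((V_R - c) ^ 2 / 2) ((V_F - c) ^ 2 / 2) with hKdef
  have hgbound : ∀ v ≤ V_F, g v ≤ (V_F - V_R) * Real.exp K := by
    intro v hv
    have hmax : max v V_R ≤ V_F := max_le hv hV.le
    have hle : ∀ w ∈ Set.Icc (max v V_R) V_F, h w ≤ Real.exp K := by
      intro w hw
      have hw1 : V_R ≤ w := le_trans (le_max_right _ _) hw.1
      have hw2 : w ≤ V_F := hw.2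
      have : (w - c) ^ 2 / 2 ≤ K := by
        rcases le_total w c with hwc | hwc
        · refine le_trans ?_ (le_max_left _ _)
          nlinarith
        · refine le_trans ?_ (le_max_right _ _)
          nlinarith
      exact Real.exp_le_exp.2 this
    calc g v ≤ ∫ _ in (max v V_R)..V_F, Real.exp K :=
          intervalIntegral.integral_mono_on hmax (hhint _ _)
            (intervalIntegrable_const) hle
      _ = (V_F - max v V_R) * Real.exp K := by
          rw [intervalIntegral.integral_const]; ring_nf
      _ ≤ (V_F - V_R) * Real.exp K := by
          have := le_max_right v V_R
          nlinarith [Real.exp_pos K]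
  have hgnonneg : ∀ v ≤ V_F, 0 ≤ g v := by
    intro v hv
    exact intervalIntegral.integral_nonneg (max_le hv hV.le)
      (fun w _ => (Real.exp_pos _).le)
  -- integrability of f on Iic V_F
  have hdom : Integrable (fun v => ((V_F - V_R) * Real.exp K) *
      Real.exp (-(1/2) * (v - c) ^ 2)) volume := by
    exact ((integrable_exp_neg_mul_sq (by norm_num : (0:ℝ) < 1/2)).comp_sub_right c).const_mul _
  have hfint : IntegrableOn f (Set.Iic V_F) volume := by
    refine Integrable.mono' (hdom.integrableOn) (hfcont.aestronglyMeasurable.restrict) ?_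
    refine (ae_restrict_iff' measurableSet_Iic).2 (Filter.Eventually.of_forall fun v hv => ?_)
    have h1 : 0 ≤ g v := hgnonneg v hv
    have h2 : g v ≤ (V_F - V_R) * Real.exp K := hgbound v hv
    have hexp : Real.exp (-(v - c) ^ 2 / 2) = Real.exp (-(1/2) * (v - c) ^ 2) := by
      ring_nf
    rw [Real.norm_eq_abs, abs_of_nonneg (by positivity : (0:ℝ) ≤ f v)]
    simp only [hfdef, hexp]
    nlinarith [Real.exp_pos (-(1/2) * (v - c) ^ 2)]
  -- restrict to Icc V_R Vq
  have hfnonneg : ∀ v ≤ V_F, 0 ≤ f v := fun v hv => by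
    have := hgnonneg v hv; positivity
  have hsub : Set.Icc V_R Vq ⊆ Set.Iic V_F := fun x hx => by
    simp only [Set.mem_Iic]
    have := hx.2
    rw [hVF]; rw [hVqdef] at this; linarith
  have hstep1 : ∫ v in Set.Icc V_R Vq, f v ≤ ∫ v in Set.Iic V_F, f v := by
    refine setIntegral_mono_set hfint ?_ (HasSubset.Subset.eventuallyLE hsub)
    exact (ae_restrict_iff' measurableSet_Iic).2
      (Filter.Eventually.of_forall fun v hv => hfnonneg v hv)
  -- lower bound on Icc
  have hkey : ∀ v ∈ Set.Icc V_R Vq, 2 * δ * Real.exp (δ * (V_R - c)) ≤ f v := by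
    intro v hv
    have hv1 : V_R ≤ v := hv.1
    have hv2 : v ≤ Vq := hv.2
    have hmaxv : max v V_R = v := max_eq_left hv1
    have hmVF : m ≤ V_F := by rw [hVF, hmdef]; linarith
    have hvm : v ≤ m := by rw [hmdef]; rw [hVqdef] at hv2; linarith
    -- g v ≥ ∫_m^{V_F} h ≥ (V_F - m) * exp((m-c)^2/2)
    have hsplit : g v = (∫ w in v..m, h w) + ∫ w in m..V_F, h w := by
      simp only [hgdef, hmaxv]
      exact (intervalIntegral.integral_add_adjacent_intervals (hhint v m) (hhint m V_F)).symm
    have hpart1 : 0 ≤ ∫ w in v..m, h w :=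
      intervalIntegral.integral_nonneg hvm (fun w _ => (Real.exp_pos _).le)
    have hpart2 : (V_F - m) * Real.exp ((m - c) ^ 2 / 2) ≤ ∫ w in m..V_F, h w := by
      have hle : ∀ w ∈ Set.Icc m V_F, Real.exp ((m - c) ^ 2 / 2) ≤ h w := by
        intro w hw
        apply Real.exp_le_exp.2
        have h1 : c ≤ m := by rw [hmdef]; linarith
        nlinarith [hw.1, hw.2]
      calc (V_F - m) * Real.exp ((m - c) ^ 2 / 2)
          = ∫ _ in m..V_F, Real.exp ((m - c) ^ 2 / 2) := by
            rw [intervalIntegral.integral_const, smul_eq_mul]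
        _ ≤ ∫ w in m..V_F, h w :=
            intervalIntegral.integral_mono_on hmVF intervalIntegrable_const (hhint _ _) hle
    have hg_lb : (V_F - m) * Real.exp ((m - c) ^ 2 / 2) ≤ g v := by
      rw [hsplit]; linarith
    -- exp factor
    have hexp_lb : Real.exp (-(Vq - c) ^ 2 / 2) ≤ Real.exp (-(v - c) ^ 2 / 2) := by
      apply Real.exp_le_exp.2
      have h1 : c ≤ v := le_trans hc hv1
      have h2 : v ≤ Vq := hv2
      nlinarith
    have hprod : Real.exp (-(Vq - c) ^ 2 / 2) * ((V_F - m) * Real.exp ((m - c) ^ 2 / 2))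
        ≤ f v := by
      have hge : 0 ≤ Real.exp (-(v - c) ^ 2 / 2) := (Real.exp_pos _).le
      have hgv : 0 ≤ (V_F - m) * Real.exp ((m - c) ^ 2 / 2) := by
        have : 0 ≤ V_F - m := by linarith
        positivity
      calc Real.exp (-(Vq - c) ^ 2 / 2) * ((V_F - m) * Real.exp ((m - c) ^ 2 / 2))
          ≤ Real.exp (-(v - c) ^ 2 / 2) * ((V_F - m) * Real.exp ((m - c) ^ 2 / 2)) :=
            mul_le_mul_of_nonneg_right hexp_lb hgv
        _ ≤ Real.exp (-(v - c) ^ 2 / 2) * g v := mul_le_mul_of_nonneg_left hg_lb hge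
    refine le_trans ?_ hprod
    have hVFm : V_F - m = 2 * δ := by rw [hVF, hmdef]; ring
    rw [hVFm]
    have hcomb : Real.exp (-(Vq - c) ^ 2 / 2) * (2 * δ * Real.exp ((m - c) ^ 2 / 2))
        = 2 * δ * Real.exp (((m - c) ^ 2 - (Vq - c) ^ 2) / 2) := by
      rw [mul_comm, mul_assoc, ← Real.exp_add]
      congr 1
      ring_nf
    rw [hcomb]
    have hexpo : δ * (V_R - c) ≤ ((m - c) ^ 2 - (Vq - c) ^ 2) / 2 := by
      have h1 : (m - c) ^ 2 - (Vq - c) ^ 2 = δ * (2 * V_R + 3 * δ - 2 * c) := by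
        rw [hmdef, hVqdef]; ring
      rw [h1]
      nlinarith [hδ]
    have hee := Real.exp_le_exp.2 hexpo
    nlinarith [Real.exp_pos (δ * (V_R - c)), hδ]
  have hmeas : MeasurableSet (Set.Icc V_R Vq) := measurableSet_Icc
  have hvol : volume (Set.Icc V_R Vq) ≠ ⊤ := by
    rw [Real.volume_Icc]; exact ENNReal.ofReal_ne_top
  have hstep2 : (2 * δ * Real.exp (δ * (V_R - c))) * (volume (Set.Icc V_R Vq)).toReal
      ≤ ∫ v in Set.Icc V_R Vq, f v :=
    setIntegral_ge_of_const_le_real hmeas hvol hkey (hfint.mono_set hsub)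
  have hvol2 : (volume (Set.Icc V_R Vq)).toReal = δ := by
    rw [Real.volume_Icc, ENNReal.toReal_ofReal (by rw [hVqdef]; linarith : (0:ℝ) ≤ Vq - V_R)]
    rw [hVqdef]; ring
  rw [hvol2] at hstep2
  rw [hIfun]
  calc 2 * δ ^ 2 * Real.exp (δ * (V_R - c))
      = (2 * δ * Real.exp (δ * (V_R - c))) * δ := by ring
    _ ≤ ∫ v in Set.Icc V_R Vq, f v := hstep2
    _ ≤ ∫ v in Set.Iic V_F, f v := hstep1

/-- For `b ≤ 0` let `N_b*` be the unique solution of `N·I(b,N) = 1`. Then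
`N_b* → 0` as `b → −∞`. -/
theorem Nstar_tendsto_zero_atBot (V_R V_F : ℝ) (hV : V_R < V_F)
    (Nstar : ℝ → ℝ)
    (hNstar : ∀ b : ℝ, b ≤ 0 →
      0 < Nstar b ∧ Nstar b * Ifun V_R V_F b (Nstar b) = 1 ∧
      ∀ N : ℝ, 0 < N → N * Ifun V_R V_F b N = 1 → N = Nstar b) :
    Tendsto Nstar atBot (nhds 0) := by
  rw [NormedAddCommGroup.tendsto_nhds_zero]
  intro ε hε
  set δ := (V_F - V_R) / 4 with hδdef
  have hδ : 0 < δ := by rw [hδdef]; linarith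
  -- eventually conditions on b
  have htend : Tendsto (fun b : ℝ => ε * (2 * δ ^ 2) * Real.exp (δ * (V_R - b * ε)))
      atBot atTop := by
    apply Tendsto.const_mul_atTop (by positivity)
    apply Real.tendsto_exp_atTop.comp
    apply Tendsto.const_mul_atTop hδ
    apply tendsto_atTop_add_const_left
    exact (tendsto_neg_atBot_atTop.comp (tendsto_id.atBot_mul_const hε))
  have h1 : ∀ᶠ b : ℝ in atBot, 1 < ε * (2 * δ ^ 2) * Real.exp (δ * (V_R - b * ε)) :=
    htend.eventually_gt_atTop 1
  have h2 : ∀ᶠ b : ℝ in atBot, b ≤ 0 := eventually_le_atBot 0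
  have h3 : ∀ᶠ b : ℝ in atBot, b * ε ≤ V_R := by
    have : Tendsto (fun b : ℝ => b * ε) atBot atBot := tendsto_id.atBot_mul_const hε
    exact this.eventually_le_atBot V_R
  filter_upwards [h1, h2, h3] with b hb1 hb2 hb3
  obtain ⟨hpos, heq, _⟩ := hNstar b hb2
  rw [Real.norm_eq_abs, abs_of_pos hpos]
  by_contra hcon
  push_neg at hcon
  -- so Nstar b ≥ ε
  set N := Nstar b with hNdef
  have hNε : ε ≤ N := hcon
  have hbNε : b * N ≤ b * ε := mul_le_mul_of_nonpos_left hNε hb2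
  have hbN : b * N ≤ V_R := le_trans hbNε hb3
  have hlow := Ifun_lower V_R V_F hV b N hbN
  have hmono : Real.exp (δ * (V_R - b * ε)) ≤ Real.exp (δ * (V_R - b * N)) := by
    apply Real.exp_le_exp.2
    nlinarith [hbNε, hδ]
  have : 1 < N * Ifun V_R V_F b N := by
    calc 1 < ε * (2 * δ ^ 2) * Real.exp (δ * (V_R - b * ε)) := hb1
      _ ≤ ε * (2 * δ ^ 2) * Real.exp (δ * (V_R - b * N)) := by
          apply mul_le_mul_of_nonneg_left hmono (by positivity)
      _ ≤ N * (2 * δ ^ 2 * Real.exp (δ * (V_R - b * N))) := by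
          have h0 : (0:ℝ) ≤ 2 * δ ^ 2 * Real.exp (δ * (V_R - b * N)) := by positivity
          calc ε * (2 * δ ^ 2) * Real.exp (δ * (V_R - b * N))
              = ε * (2 * δ ^ 2 * Real.exp (δ * (V_R - b * N))) := by ring
            _ ≤ N * (2 * δ ^ 2 * Real.exp (δ * (V_R - b * N))) :=
              mul_le_mul_of_nonneg_right hNε h0
      _ ≤ N * Ifun V_R V_F b N := by
          apply mul_le_mul_of_nonneg_left ?_ (le_trans hε.le hNε)
          rw [hδdef]
          exact hlow
  rw [heq] at this
  exact lt_irrefl 1 this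
end
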